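/- arXiv:1803.01464 — 10 statements merged into one kernel-verified Lean document; each statement's English description precedes it below -/
import Mathlib

section
/- Hydrogen relation: for every finite simple graph G, the connection Laplacian L is invertible over the integers, its inverse is L − |H|, and hence |H| = L − L⁻¹; concretely, L · (L − |H|) = 1 and (L − |H|) · L = 1 as S×S integer matrices. -/
open Matrix

variable {V : Type*} [Fintype V] [DecidableEq V]

/-- The simplices of the 1-dimensional simplicial complex of a graph: vertices and edges. -/
abbrev Simplex (G : SimpleGraph V) [DecidableRel G.Adj] := V ⊕ G.edgeSet

variable (G : SimpleGraph V) [DecidableRel G.Adj]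

/-- The vertex set of a simplex. -/
def sVerts : Simplex G → Set V
  | Sum.inl u => {u}
  | Sum.inr f => {w | w ∈ (f : Sym2 V)}

instance (x : Simplex G) (w : V) : Decidable (w ∈ sVerts G x) :=
  match x with
  | Sum.inl u => decidable_of_iff (w = u) (by simp [sVerts])
  | Sum.inr f => decidable_of_iff (w ∈ (f : Sym2 V)) (by simp [sVerts])

/-- Two simplices touch if their vertex sets intersect. -/
def touches (x y : Simplex G) : Prop := ∃ w, w ∈ sVerts G x ∧ w ∈ sVerts G y

instance : DecidableRel (touches G) := fun _ _ => Fintype.decidableExistsFintype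

/-- The connection Laplacian. -/
def connL : Matrix (Simplex G) (Simplex G) ℤ :=
  Matrix.of fun x y => if touches G x y then 1 else 0

/-- The sign-less incidence matrix. -/
def absd : Matrix (Simplex G) (Simplex G) ℤ :=
  Matrix.of fun a b =>
    match a, b with
    | Sum.inr f, Sum.inl u => if u ∈ (f : Sym2 V) then 1 else 0
    | _, _ => 0

/-- The sign-less Hodge Laplacian. -/
def absH : Matrix (Simplex G) (Simplex G) ℤ := (absd G + (absd G)ᵀ) ^ 2

private lemma ite_or_split {a b : V} (hab : a ≠ b) (φ : V → ℤ) :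
    ∑ w : V, (if w = a ∨ w = b then φ w else 0) = φ a + φ b := by
  have : ∀ w : V, (if w = a ∨ w = b then φ w else 0)
      = (if w = a then φ w else 0) + (if w = b then φ w else 0) := by
    intro w
    by_cases h1 : w = a <;> by_cases h2 : w = b <;> simp_all
  simp only [this, Finset.sum_add_distrib, Finset.sum_ite_eq', Finset.mem_univ, if_true]

private lemma key_sym2 {e e' : Sym2 V} (he : ¬ e.IsDiag) :
    ∑ w : V, (if w ∈ e then (1:ℤ) else 0) * (if w ∈ e' then 1 else 0)
      = (if ∃ w, w ∈ e ∧ w ∈ e' then (1:ℤ) else 0) + (if e = e' then 1 else 0) := by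
  induction e using Sym2.inductionOn with
  | hf a b =>
    have hab : a ≠ b := by simpa using he
    have lhs : ∑ w : V, (if w ∈ s(a,b) then (1:ℤ) else 0) * (if w ∈ e' then 1 else 0)
        = (if a ∈ e' then (1:ℤ) else 0) + (if b ∈ e' then 1 else 0) := by
      simp only [boole_mul, Sym2.mem_iff, ← ite_and]
      have : ∀ w : V, (if (w = a ∨ w = b) ∧ w ∈ e' then (1:ℤ) else 0)
          = (if w = a ∨ w = b then (if w ∈ e' then (1:ℤ) else 0) else 0) := by
        intro w; by_cases h : w = a ∨ w = b <;> simp [h]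
      rw [Finset.sum_congr rfl fun w _ => this w, ite_or_split hab]
    rw [lhs]
    have hex : (∃ w, w ∈ s(a,b) ∧ w ∈ e') ↔ (a ∈ e' ∨ b ∈ e') := by
      constructor
      · rintro ⟨w, hw, hw'⟩
        rcases Sym2.mem_iff.mp hw with rfl | rfl
        · exact Or.inl hw'
        · exact Or.inr hw'
      · rintro (h | h)
        exacts [⟨a, by simp, h⟩, ⟨b, by simp, h⟩]
    rw [if_congr hex rfl rfl]
    by_cases ha : a ∈ e' <;> by_cases hb : b ∈ e'
    · have : e' = s(a,b) := (Sym2.mem_and_mem_iff hab).mp ⟨ha, hb⟩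
      subst this; simp [ha, hb]
    · have : s(a,b) ≠ e' := fun h => hb (h ▸ Sym2.mem_mk_right a b)
      simp [ha, hb, this]
    · have : s(a,b) ≠ e' := fun h => ha (h ▸ Sym2.mem_mk_left a b)
      simp [ha, hb, this]
    · have : s(a,b) ≠ e' := fun h => ha (h ▸ Sym2.mem_mk_left a b)
      simp [ha, hb, this]

/-- Key counting lemma for edges. -/
private lemma key (f h : G.edgeSet) :
    ∑ w : V, (if w ∈ (f : Sym2 V) then (1:ℤ) else 0) * (if w ∈ (h : Sym2 V) then 1 else 0)
      = (if touches G (Sum.inr f) (Sum.inr h) then (1:ℤ) else 0) + (if f = h then 1 else 0) := by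
  have hd : ¬ (f : Sym2 V).IsDiag := G.not_isDiag_of_mem_edgeSet f.2
  rw [key_sym2 hd]
  congr 1
  · refine if_congr ?_ rfl rfl
    simp [touches, sVerts]
  · refine if_congr ?_ rfl rfl
    exact ⟨fun h' => Subtype.ext h', fun h' => congrArg _ h'⟩

-- Entry lemmas for connL
private lemma connL_vv (u v : V) :
    connL G (Sum.inl u) (Sum.inl v) = if u = v then 1 else 0 := by
  refine if_congr ?_ rfl rfl
  simp [touches, sVerts]

private lemma connL_ve (u : V) (f : G.edgeSet) :
    connL G (Sum.inl u) (Sum.inr f) = if u ∈ (f : Sym2 V) then 1 else 0 := by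
  refine if_congr ?_ rfl rfl
  simp [touches, sVerts]

private lemma connL_ev (u : V) (f : G.edgeSet) :
    connL G (Sum.inr f) (Sum.inl u) = if u ∈ (f : Sym2 V) then 1 else 0 := by
  refine if_congr ?_ rfl rfl
  simp [touches, sVerts, and_comm]

private lemma connL_ee (f g : G.edgeSet) :
    connL G (Sum.inr f) (Sum.inr g) = if touches G (Sum.inr f) (Sum.inr g) then 1 else 0 := rfl

-- Entry lemmas for A = absd + absdᵀ
private lemma A_vv (u v : V) : (absd G + (absd G)ᵀ) (Sum.inl u) (Sum.inl v) = 0 := by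
  simp [absd, Matrix.add_apply, Matrix.transpose_apply]

private lemma A_ve (u : V) (f : G.edgeSet) :
    (absd G + (absd G)ᵀ) (Sum.inl u) (Sum.inr f) = if u ∈ (f : Sym2 V) then 1 else 0 := by
  simp [absd, Matrix.add_apply, Matrix.transpose_apply]

private lemma A_ev (u : V) (f : G.edgeSet) :
    (absd G + (absd G)ᵀ) (Sum.inr f) (Sum.inl u) = if u ∈ (f : Sym2 V) then 1 else 0 := by
  simp [absd, Matrix.add_apply, Matrix.transpose_apply]

private lemma A_ee (f g : G.edgeSet) : (absd G + (absd G)ᵀ) (Sum.inr f) (Sum.inr g) = 0 := by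
  simp [absd, Matrix.add_apply, Matrix.transpose_apply]

-- Entry lemmas for absH
private lemma absH_vv (u v : V) :
    absH G (Sum.inl u) (Sum.inl v)
      = ∑ f : G.edgeSet,
          (if u ∈ (f : Sym2 V) then (1:ℤ) else 0) * (if v ∈ (f : Sym2 V) then 1 else 0) := by
  rw [absH, sq, Matrix.mul_apply, Fintype.sum_sum_type]
  simp only [A_vv, A_ve, A_ev, zero_mul]
  simp

private lemma absH_ve (u : V) (g : G.edgeSet) : absH G (Sum.inl u) (Sum.inr g) = 0 := by
  rw [absH, sq, Matrix.mul_apply, Fintype.sum_sum_type]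
  simp only [A_vv, A_ve, A_ev, A_ee, zero_mul, mul_zero]
  simp

private lemma absH_ev (u : V) (g : G.edgeSet) : absH G (Sum.inr g) (Sum.inl u) = 0 := by
  rw [absH, sq, Matrix.mul_apply, Fintype.sum_sum_type]
  simp only [A_vv, A_ve, A_ev, A_ee, zero_mul, mul_zero]
  simp

private lemma absH_ee (f g : G.edgeSet) :
    absH G (Sum.inr f) (Sum.inr g)
      = (if touches G (Sum.inr f) (Sum.inr g) then (1:ℤ) else 0) + (if f = g then 1 else 0) := by
  rw [absH, sq, Matrix.mul_apply, Fintype.sum_sum_type]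
  simp only [A_ee, A_ev, A_ve, zero_mul, mul_zero, Finset.sum_const_zero, add_zero]
  exact key G f g

-- Entry lemmas for M = connL - absH
private lemma M_vv (u v : V) :
    (connL G - absH G) (Sum.inl u) (Sum.inl v)
      = (if u = v then (1:ℤ) else 0)
        - ∑ f : G.edgeSet,
            (if u ∈ (f : Sym2 V) then (1:ℤ) else 0) * (if v ∈ (f : Sym2 V) then 1 else 0) := by
  rw [Matrix.sub_apply, connL_vv, absH_vv]

private lemma M_ve (u : V) (g : G.edgeSet) :
    (connL G - absH G) (Sum.inl u) (Sum.inr g) = if u ∈ (g : Sym2 V) then 1 else 0 := by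
  rw [Matrix.sub_apply, connL_ve, absH_ve, sub_zero]

private lemma M_ev (u : V) (g : G.edgeSet) :
    (connL G - absH G) (Sum.inr g) (Sum.inl u) = if u ∈ (g : Sym2 V) then 1 else 0 := by
  rw [Matrix.sub_apply, connL_ev, absH_ev, sub_zero]

private lemma M_ee (f g : G.edgeSet) :
    (connL G - absH G) (Sum.inr f) (Sum.inr g) = -(if f = g then (1:ℤ) else 0) := by
  rw [Matrix.sub_apply, absH_ee]
  show (if touches G (Sum.inr f) (Sum.inr g) then (1:ℤ) else 0) - _ = _
  ring

private lemma L_symm : (connL G)ᵀ = connL G := by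
  ext x y
  refine if_congr ?_ rfl rfl
  exact ⟨fun ⟨w, h1, h2⟩ => ⟨w, h2, h1⟩, fun ⟨w, h1, h2⟩ => ⟨w, h2, h1⟩⟩

private lemma H_symm : (absH G)ᵀ = absH G := by
  have hA : (absd G + (absd G)ᵀ)ᵀ = absd G + (absd G)ᵀ := by
    rw [Matrix.transpose_add, Matrix.transpose_transpose, add_comm]
  rw [absH, sq, Matrix.transpose_mul, hA]

/-- Hydrogen relation: the connection Laplacian `L` is invertible over `ℤ` with inverse
`L - |H|`, i.e. `|H| = L - L⁻¹`. -/
theorem hydrogen_relation :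
    connL G * (connL G - absH G) = 1 ∧ (connL G - absH G) * connL G = 1 := by
  have h1 : connL G * (connL G - absH G) = 1 := by
    ext x y
    rw [Matrix.mul_apply, Fintype.sum_sum_type]
    cases x with
    | inl u =>
      cases y with
      | inl v =>
        simp only [connL_vv, connL_ve, M_vv, M_ve, M_ev]
        rw [Finset.sum_congr rfl (fun w _ => by rw [ite_mul, one_mul, zero_mul]),
          Finset.sum_ite_eq, if_pos (Finset.mem_univ u)]
        rw [sub_add_cancel]
        simp [Matrix.one_apply]
      | inr g =>
        simp only [connL_vv, connL_ve, M_ve, M_ee]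
        rw [Finset.sum_congr rfl (fun w _ => by rw [ite_mul, one_mul, zero_mul]),
          Finset.sum_ite_eq, if_pos (Finset.mem_univ u)]
        have : ∑ f : G.edgeSet,
            (if u ∈ (f : Sym2 V) then (1:ℤ) else 0) * -(if f = g then (1:ℤ) else 0)
            = -(if u ∈ (g : Sym2 V) then (1:ℤ) else 0) := by
          rw [Finset.sum_congr rfl (fun f _ => by
            rw [mul_neg, mul_ite, mul_one, mul_zero]), Finset.sum_neg_distrib,
            Finset.sum_ite_eq', if_pos (Finset.mem_univ g)]
        rw [this, add_neg_cancel]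
        simp [Matrix.one_apply]
    | inr f =>
      cases y with
      | inl v =>
        simp only [connL_ev, connL_ee, M_vv, M_ev]
        have e1 : ∑ w : V, (if w ∈ (f : Sym2 V) then (1:ℤ) else 0) * (if w = v then 1 else 0)
            = (if v ∈ (f : Sym2 V) then (1:ℤ) else 0) := by
          rw [Finset.sum_congr rfl (fun w _ => by rw [mul_ite, mul_one, mul_zero]),
            Finset.sum_ite_eq', if_pos (Finset.mem_univ v)]
        have e2 : ∑ w : V, (if w ∈ (f : Sym2 V) then (1:ℤ) else 0) *
            ∑ h : G.edgeSet,
              (if w ∈ (h : Sym2 V) then (1:ℤ) else 0) * (if v ∈ (h : Sym2 V) then 1 else 0)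
            = ∑ h : G.edgeSet,
                ((if touches G (Sum.inr f) (Sum.inr h) then (1:ℤ) else 0)
                  + (if f = h then 1 else 0)) * (if v ∈ (h : Sym2 V) then 1 else 0) := by
          rw [Finset.sum_congr rfl (fun w _ => Finset.mul_sum _ _ _), Finset.sum_comm]
          refine Finset.sum_congr rfl (fun h _ => ?_)
          rw [Finset.sum_congr rfl (fun w _ => (mul_assoc _ _ _).symm), ← Finset.sum_mul,
            key]
        have e3 : ∑ h : G.edgeSet,
            ((if touches G (Sum.inr f) (Sum.inr h) then (1:ℤ) else 0)
              + (if f = h then 1 else 0)) * (if v ∈ (h : Sym2 V) then 1 else 0)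
            = (∑ h : G.edgeSet,
                (if touches G (Sum.inr f) (Sum.inr h) then (1:ℤ) else 0) *
                  (if v ∈ (h : Sym2 V) then 1 else 0))
              + (if v ∈ (f : Sym2 V) then (1:ℤ) else 0) := by
          rw [Finset.sum_congr rfl (fun h _ => add_mul _ _ _), Finset.sum_add_distrib]
          congr 1
          rw [Finset.sum_congr rfl (fun h _ => by rw [ite_mul, one_mul, zero_mul]),
            Finset.sum_ite_eq, if_pos (Finset.mem_univ f)]
        rw [Finset.sum_congr rfl (fun w _ => mul_sub _ _ _), Finset.sum_sub_distrib,
          e1, e2, e3, Matrix.one_apply_ne (by simp)]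
        ring
      | inr g =>
        simp only [connL_ev, connL_ee, M_ve, M_ee]
        rw [key]
        have : ∑ h : G.edgeSet,
            (if touches G (Sum.inr f) (Sum.inr h) then (1:ℤ) else 0) *
              -(if h = g then (1:ℤ) else 0)
            = -(if touches G (Sum.inr f) (Sum.inr g) then (1:ℤ) else 0) := by
          rw [Finset.sum_congr rfl (fun h _ => by
            rw [mul_neg, mul_ite, mul_one, mul_zero]), Finset.sum_neg_distrib,
            Finset.sum_ite_eq', if_pos (Finset.mem_univ g)]
        rw [this]
        have : (if touches G (Sum.inr f) (Sum.inr g) then (1:ℤ) else 0)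
            + (if f = g then (1:ℤ) else 0)
            + -(if touches G (Sum.inr f) (Sum.inr g) then (1:ℤ) else 0)
            = (if f = g then (1:ℤ) else 0) := by ring
        rw [this]
        simp [Matrix.one_apply, Subtype.ext_iff]
  refine ⟨h1, ?_⟩
  have := congrArg Matrix.transpose h1
  rw [Matrix.transpose_mul, Matrix.transpose_sub, L_symm, H_symm, Matrix.transpose_one] at this
  exact this
end

section
/- Explicit Green function in dimension one: let g be the S×S integer matrix defined by g(x,x) = 1 − deg(x) if x is a vertex of vertex degree deg(x); g(x,x) = −1 if x is an edge; g(x,y) = −1 if x and y are distinct vertices joined by an edge of G; g(x,y) = 1 if one of x, y is a vertex and the other is an edge containing that vertex; and g(x,y) = 0 in all remaining cases (distinct non-adjacent vertices, distinct edges, or a vertex not contained in the edge). Then L · g = 1, i.e. g is the inverse of the connection Laplacian L. -/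
open Matrix

variable {V : Type*} [Fintype V] [DecidableEq V]

variable (G : SimpleGraph V) [DecidableRel G.Adj]

/-- The explicit Green function in dimension one. -/
def green : Matrix (Simplex G) (Simplex G) ℤ :=
  Matrix.of fun x y =>
    match x, y with
    | Sum.inl u, Sum.inl w =>
        if u = w then 1 - (G.degree u : ℤ)
        else if G.Adj u w then -1 else 0
    | Sum.inl u, Sum.inr f => if u ∈ (f : Sym2 V) then 1 else 0
    | Sum.inr f, Sum.inl u => if u ∈ (f : Sym2 V) then 1 else 0
    | Sum.inr f, Sum.inr g => if f = g then -1 else 0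

lemma sum_deg' (u : V) :
    ∑ f : G.edgeSet, (if u ∈ (f:Sym2 V) then (1:ℤ) else 0) = G.degree u := by
  rw [Finset.sum_boole]
  norm_cast
  rw [← Fintype.card_subtype, ← SimpleGraph.card_incidenceSet_eq_degree]
  exact Fintype.card_congr
    ⟨fun x => ⟨x.1.1, x.1.2, x.2⟩, fun x => ⟨⟨x.1, x.2.1⟩, x.2.2⟩,
     fun x => rfl, fun x => rfl⟩

lemma sum_both (u w : V) (h : u ≠ w) :
    ∑ f : G.edgeSet, (if u ∈ (f:Sym2 V) ∧ w ∈ (f:Sym2 V) then (1:ℤ) else 0)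
      = if G.Adj u w then 1 else 0 := by
  by_cases hadj : G.Adj u w
  · rw [if_pos hadj, Finset.sum_eq_single (⟨s(u,w), hadj⟩ : G.edgeSet)]
    · simp
    · intro f _ hf
      rw [if_neg]
      rintro ⟨h1, h2⟩
      exact hf (Subtype.ext ((Sym2.mem_and_mem_iff h).mp ⟨h1, h2⟩))
    · simp
  · rw [if_neg hadj]
    apply Finset.sum_eq_zero
    intro f _
    rw [if_neg]
    rintro ⟨h1, h2⟩
    have he := (Sym2.mem_and_mem_iff h).mp ⟨h1, h2⟩
    exact hadj (by rw [← SimpleGraph.mem_edgeSet, ← he]; exact f.2)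

lemma sum_pair_ind (a b : V) (hab : a ≠ b) (F : V → ℤ) :
    ∑ x : V, (if a = x ∨ b = x then F x else 0) = F a + F b := by
  rw [← Finset.sum_filter]
  have h : Finset.univ.filter (fun x => a = x ∨ b = x) = {a, b} := by
    ext x; simp [eq_comm]
  rw [h, Finset.sum_pair hab]

/-- Explicit Green function in dimension one: `g` is a right inverse of the
connection Laplacian `L`. -/
theorem green_inverse : connL G * green G = 1 := by
  ext x y
  rw [Matrix.mul_apply]
  cases x with
  | inl u =>
    cases y with
    | inl w =>
      simp only [connL, green, Matrix.of_apply, Fintype.sum_sum_type, touches, sVerts,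
        Matrix.one_apply, Set.mem_singleton_iff, Set.mem_setOf_eq, exists_eq_left,
        exists_eq_right, boole_mul, Finset.sum_ite_eq, Finset.mem_univ, if_true]
      rw [show (∑ f : G.edgeSet, if u ∈ (f:Sym2 V) then (if w ∈ (f:Sym2 V) then (1:ℤ) else 0) else 0)
          = ∑ f : G.edgeSet, (if u ∈ (f:Sym2 V) ∧ w ∈ (f:Sym2 V) then (1:ℤ) else 0) by
        simp [ite_and]]
      by_cases huw : u = w
      · subst huw
        simp only [if_pos rfl, Sum.inl.injEq]
        rw [show (∑ f : G.edgeSet, if u ∈ (f:Sym2 V) ∧ u ∈ (f:Sym2 V) then (1:ℤ) else 0)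
            = ∑ f : G.edgeSet, (if u ∈ (f:Sym2 V) then (1:ℤ) else 0) by simp [and_self],
          sum_deg']
        simp
      · rw [sum_both G u w huw, if_neg huw]
        simp only [Sum.inl.injEq, if_neg huw]
        by_cases hadj : G.Adj u w <;> simp [hadj]
    | inr h =>
      simp only [connL, green, Matrix.of_apply, Fintype.sum_sum_type, touches, sVerts,
        Matrix.one_apply, Set.mem_singleton_iff, Set.mem_setOf_eq, exists_eq_left,
        exists_eq_right, boole_mul, Finset.sum_ite_eq, Finset.mem_univ, if_true]
      have e1 : ∀ f : G.edgeSet, (if u ∈ (f:Sym2 V) then (if f = h then (-1:ℤ) else 0) else 0)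
          = if f = h then (if u ∈ (f:Sym2 V) then (-1:ℤ) else 0) else 0 := fun f => by
        split <;> split <;> simp_all
      simp_rw [e1, Finset.sum_ite_eq', Finset.mem_univ, if_true]
      by_cases hu : u ∈ (h:Sym2 V) <;> simp [hu]
  | inr f =>
    obtain ⟨e, he⟩ := f
    induction e using Sym2.ind with
    | _ a b =>
    have hab : G.Adj a b := he
    have hne : a ≠ b := G.ne_of_adj hab
    cases y with
    | inl w =>
      simp only [connL, green, Matrix.of_apply, Fintype.sum_sum_type, touches, sVerts,
        Matrix.one_apply, Set.mem_singleton_iff, Set.mem_setOf_eq, exists_eq_left,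
        exists_eq_right, boole_mul, Sym2.mem_iff, or_and_right, exists_or, exists_eq_left]
      rw [sum_pair_ind a b hne]
      have e2 : ∀ x : G.edgeSet,
          (if a ∈ (x:Sym2 V) ∨ b ∈ (x:Sym2 V) then (if w ∈ (x:Sym2 V) then (1:ℤ) else 0) else 0)
          = (if a ∈ (x:Sym2 V) ∧ w ∈ (x:Sym2 V) then (1:ℤ) else 0)
            + (if b ∈ (x:Sym2 V) ∧ w ∈ (x:Sym2 V) then (1:ℤ) else 0)
            - (if (a ∈ (x:Sym2 V) ∧ w ∈ (x:Sym2 V)) ∧ (b ∈ (x:Sym2 V) ∧ w ∈ (x:Sym2 V))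
                then (1:ℤ) else 0) := fun x => by
        by_cases h1 : a ∈ (x:Sym2 V) <;> by_cases h2 : b ∈ (x:Sym2 V) <;>
          by_cases h3 : w ∈ (x:Sym2 V) <;> simp_all
      simp_rw [e2, Finset.sum_sub_distrib, Finset.sum_add_distrib]
      by_cases hwa : w = a
      · subst hwa
        have ew : ∀ x : G.edgeSet, ((w ∈ (x:Sym2 V) ∧ w ∈ (x:Sym2 V)) ∧
            (b ∈ (x:Sym2 V) ∧ w ∈ (x:Sym2 V))) = (b ∈ (x:Sym2 V) ∧ w ∈ (x:Sym2 V)) := fun x => by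
          by_cases h1 : w ∈ (x:Sym2 V) <;> by_cases h2 : b ∈ (x:Sym2 V) <;> simp_all
        simp_rw [ew, and_self, sum_deg', sum_both G b w (Ne.symm hne)]
        simp [hne, Ne.symm hne, hab.symm]
        ring
      · by_cases hwb : w = b
        · subst hwb
          have ew : ∀ x : G.edgeSet, ((a ∈ (x:Sym2 V) ∧ w ∈ (x:Sym2 V)) ∧
              (w ∈ (x:Sym2 V) ∧ w ∈ (x:Sym2 V))) = (a ∈ (x:Sym2 V) ∧ w ∈ (x:Sym2 V)) := fun x => by
            by_cases h1 : w ∈ (x:Sym2 V) <;> by_cases h2 : a ∈ (x:Sym2 V) <;> simp_all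
          simp_rw [ew, and_self, sum_deg', sum_both G a w hne]
          simp [hne, hab]
          ring
        · have ew : ∀ x : G.edgeSet, ((a ∈ (x:Sym2 V) ∧ w ∈ (x:Sym2 V)) ∧
              (b ∈ (x:Sym2 V) ∧ w ∈ (x:Sym2 V))) = False := fun x => by
            simp only [eq_iff_iff, iff_false]
            rintro ⟨⟨h1, h2⟩, h3, _⟩
            have ea := (Sym2.mem_and_mem_iff (show a ≠ w from fun hh => hwa hh.symm)).mp ⟨h1, h2⟩
            have eb := (Sym2.mem_and_mem_iff (show b ≠ w from fun hh => hwb hh.symm)).mp ⟨h3, h2⟩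
            have hh := ea.symm.trans eb
            rw [Sym2.eq_iff] at hh
            rcases hh with ⟨h4, _⟩ | ⟨h4, _⟩
            · exact hne h4
            · exact hwa h4.symm
          simp_rw [ew, sum_both G a w (fun hh => hwa hh.symm),
            sum_both G b w (fun hh => hwb hh.symm)]
          simp only [if_false, Finset.sum_const_zero, sub_zero]
          rw [if_neg (fun hh : a = w => hwa hh.symm), if_neg (fun hh : b = w => hwb hh.symm),
            if_neg (show ¬(Sum.inr (⟨s(a,b), he⟩ : G.edgeSet) = Sum.inl w) by simp)]
          by_cases h1 : G.Adj a w <;> by_cases h2 : G.Adj b w <;>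
            simp_all [G.adj_comm w a, G.adj_comm w b]
    | inr h =>
      simp only [connL, green, Matrix.of_apply, Fintype.sum_sum_type, touches, sVerts,
        Matrix.one_apply, Set.mem_singleton_iff, Set.mem_setOf_eq, exists_eq_left,
        exists_eq_right, boole_mul, Sym2.mem_iff, or_and_right, exists_or, exists_eq_left]
      rw [sum_pair_ind a b hne]
      have e3 : ∀ x : G.edgeSet,
          (if a ∈ (x:Sym2 V) ∨ b ∈ (x:Sym2 V) then (if x = h then (-1:ℤ) else 0) else 0)
          = if x = h then (if a ∈ (x:Sym2 V) ∨ b ∈ (x:Sym2 V) then (-1:ℤ) else 0) else 0 :=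
        fun x => by split <;> split <;> simp_all
      simp_rw [e3, Finset.sum_ite_eq', Finset.mem_univ, if_true]
      by_cases hfh : (⟨s(a,b), he⟩ : G.edgeSet) = h
      · subst hfh
        simp [Sym2.mem_iff]
      · have hnb : ¬(a ∈ (h:Sym2 V) ∧ b ∈ (h:Sym2 V)) := by
          rintro ⟨h1, h2⟩
          exact hfh (Subtype.ext ((Sym2.mem_and_mem_iff hne).mp ⟨h1, h2⟩).symm)
        rw [if_neg (show ¬(Sum.inr (⟨s(a,b), he⟩ : G.edgeSet) = Sum.inr h) by simpa using hfh)]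
        clear e3
        by_cases h1 : a ∈ (h:Sym2 V) <;> by_cases h2 : b ∈ (h:Sym2 V) <;> simp_all
end

section
/- Unimodularity in dimension one: for every finite simple graph G, the determinant of the connection Laplacian L is 1 or −1. -/
open Matrix

variable {V : Type*} [Fintype V] [DecidableEq V]

variable (G : SimpleGraph V) [DecidableRel G.Adj]

lemma connL_blocks11 : (connL G).toBlocks₁₁ = 1 := by
  ext u v
  by_cases h : u = v <;>
    simp [Matrix.toBlocks₁₁, connL, touches, sVerts, Matrix.one_apply, h]

lemma schur_eq : (connL G).toBlocks₂₂ - (connL G).toBlocks₂₁ * (connL G).toBlocks₁₂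
    = -1 := by
  classical
  ext e f
  have hsum : ((connL G).toBlocks₂₁ * (connL G).toBlocks₁₂) e f
      = ((Finset.univ.filter
          fun u => u ∈ (e : Sym2 V) ∧ u ∈ (f : Sym2 V)).card : ℤ) := by
    rw [Matrix.mul_apply, Finset.card_filter]
    push_cast
    refine Finset.sum_congr rfl fun u _ => ?_
    by_cases h1 : u ∈ (e : Sym2 V) <;> by_cases h2 : u ∈ (f : Sym2 V) <;>
      simp [Matrix.toBlocks₂₁, Matrix.toBlocks₁₂, connL, touches, sVerts, h1, h2]
  obtain ⟨⟨a, b⟩, hab⟩ := Quot.exists_rep (e : Sym2 V)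
  have hadj : G.Adj a b := by
    have := e.2
    rw [← hab, SimpleGraph.mem_edgeSet] at this
    exact this
  have hne : a ≠ b := hadj.ne
  by_cases hef : e = f
  · subst hef
    have hfilter : (Finset.univ.filter
        fun u => u ∈ (e : Sym2 V) ∧ u ∈ (e : Sym2 V)) = {a, b} := by
      ext u
      simp [← hab, Sym2.mem_iff]
    have htouch : touches G (Sum.inr e) (Sum.inr e) := by
      refine ⟨a, ?_, ?_⟩ <;> simp [sVerts, ← hab]
    have hcard : ({a, b} : Finset V).card = 2 := by
      rw [Finset.card_insert_of_notMem (by simp [hne]), Finset.card_singleton]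
    rw [Matrix.sub_apply, hsum, hfilter, hcard]
    simp [Matrix.toBlocks₂₂, connL, htouch, Matrix.neg_apply]
  · have hne' : (e : Sym2 V) ≠ (f : Sym2 V) := fun h => hef (Subtype.ext h)
    by_cases ht : touches G (Sum.inr e) (Sum.inr f)
    · obtain ⟨w, hw1, hw2⟩ := ht
      simp only [sVerts, Set.mem_setOf_eq] at hw1 hw2
      have hfilter : (Finset.univ.filter
          fun u => u ∈ (e : Sym2 V) ∧ u ∈ (f : Sym2 V)) = {w} := by
        ext u
        simp only [Finset.mem_filter, Finset.mem_univ, true_and,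
          Finset.mem_singleton]
        constructor
        · rintro ⟨hu1, hu2⟩
          by_contra huw
          have h1 : (e : Sym2 V) = s(u, w) :=
            (Sym2.mem_and_mem_iff huw).mp ⟨hu1, hw1⟩
          have h2 : (f : Sym2 V) = s(u, w) :=
            (Sym2.mem_and_mem_iff huw).mp ⟨hu2, hw2⟩
          exact hne' (h1.trans h2.symm)
        · rintro rfl; exact ⟨hw1, hw2⟩
      have htouch : touches G (Sum.inr e) (Sum.inr f) :=
        ⟨w, by simpa [sVerts] using hw1, by simpa [sVerts] using hw2⟩
      rw [Matrix.sub_apply, hsum, hfilter, Finset.card_singleton]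
      simp [Matrix.toBlocks₂₂, connL, htouch, Matrix.neg_apply,
        Matrix.one_apply_ne hef]
    · have hfilter : (Finset.univ.filter
          fun u => u ∈ (e : Sym2 V) ∧ u ∈ (f : Sym2 V)) = ∅ := by
        ext u
        simp only [Finset.mem_filter, Finset.mem_univ, true_and,
          Finset.notMem_empty, iff_false]
        rintro ⟨hu1, hu2⟩
        exact ht ⟨u, by simpa [sVerts] using hu1, by simpa [sVerts] using hu2⟩
      rw [Matrix.sub_apply, hsum, hfilter, Finset.card_empty]
      simp [Matrix.toBlocks₂₂, connL, ht, Matrix.neg_apply,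
        Matrix.one_apply_ne hef]

/-- Unimodularity in dimension one: the connection Laplacian has determinant `1` or `-1`. -/
theorem connL_unimodular : (connL G).det = 1 ∨ (connL G).det = -1 := by
  classical
  have h : connL G = Matrix.fromBlocks 1 (connL G).toBlocks₁₂
      (connL G).toBlocks₂₁ (connL G).toBlocks₂₂ := by
    rw [← connL_blocks11 G, Matrix.fromBlocks_toBlocks]
  have hdet : (connL G).det = (-1 : ℤ) ^ Fintype.card G.edgeSet := by
    rw [h, Matrix.det_fromBlocks_one₁₁, schur_eq G]
    rw [show (-1 : Matrix G.edgeSet G.edgeSet ℤ) = -(1 : Matrix _ _ ℤ) from rfl,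
      Matrix.det_neg, Matrix.det_one, mul_one]
  rcases Nat.even_or_odd (Fintype.card G.edgeSet) with he | ho
  · left; rw [hdet, he.neg_one_pow]
  · right; rw [hdet, ho.neg_one_pow]
end

section
/- Energy theorem in dimension one: the sum of all matrix entries of the inverse L⁻¹ = L − |H| of the connection Laplacian equals the Euler characteristic v − e of G, i.e. ∑_{x∈S} ∑_{y∈S} (L − |H|)(x,y) = v − e. -/
set_option linter.unusedSectionVars false

open Matrix

variable {V : Type*} [Fintype V] [DecidableEq V]

variable (G : SimpleGraph V) [DecidableRel G.Adj]

/-- degree as an integer sum -/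
def degI (u : V) : ℤ := ∑ f : G.edgeSet, if u ∈ (f : Sym2 V) then (1 : ℤ) else 0

lemma two_mem (f : G.edgeSet) :
    ∑ w : V, (if w ∈ (f : Sym2 V) then (1 : ℤ) else 0) = 2 := by
  obtain ⟨f, hf⟩ := f
  induction f using Sym2.ind with
  | _ a b =>
    have hab : a ≠ b := G.ne_of_adj (G.mem_edgeSet.mp hf)
    have : ∀ w : V, (if w ∈ (s(a, b) : Sym2 V) then (1 : ℤ) else 0)
        = (if w = a then (1 : ℤ) else 0) + (if w = b then (1 : ℤ) else 0) := by
      intro w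
      by_cases h1 : w = a <;> by_cases h2 : w = b <;>
        simp_all [Sym2.mem_iff]
    simp only [this, Finset.sum_add_distrib, Finset.sum_ite_eq', Finset.mem_univ, if_pos]
    norm_num

lemma edge_mem_exists (f : G.edgeSet) : ∃ w : V, w ∈ (f : Sym2 V) := by
  obtain ⟨f, hf⟩ := f
  induction f using Sym2.ind with
  | _ a b => exact ⟨a, by simp⟩

lemma touches_inl_inl (u w : V) : touches G (Sum.inl u) (Sum.inl w) ↔ u = w := by
  constructor
  · rintro ⟨z, hz1, hz2⟩
    simp [sVerts] at hz1 hz2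
    exact hz1.symm.trans hz2
  · rintro rfl; exact ⟨u, by simp [sVerts], by simp [sVerts]⟩

lemma touches_inl_inr (u : V) (f : G.edgeSet) :
    touches G (Sum.inl u) (Sum.inr f) ↔ u ∈ (f : Sym2 V) := by
  constructor
  · rintro ⟨z, hz1, hz2⟩
    simp [sVerts] at hz1 hz2
    subst hz1; exact hz2
  · intro h; exact ⟨u, by simp [sVerts], by simpa [sVerts] using h⟩

lemma touches_inr_inl (u : V) (f : G.edgeSet) :
    touches G (Sum.inr f) (Sum.inl u) ↔ u ∈ (f : Sym2 V) := by
  constructor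
  · rintro ⟨z, hz1, hz2⟩
    simp [sVerts] at hz1 hz2
    subst hz2; exact hz1
  · intro h; exact ⟨u, by simpa [sVerts] using h, by simp [sVerts]⟩

lemma touches_inr_inr (f g : G.edgeSet) :
    touches G (Sum.inr f) (Sum.inr g) ↔ ∃ w, w ∈ (f : Sym2 V) ∧ w ∈ (g : Sym2 V) := by
  constructor
  · rintro ⟨z, hz1, hz2⟩
    simp [sVerts] at hz1 hz2
    exact ⟨z, hz1, hz2⟩
  · rintro ⟨w, h1, h2⟩
    exact ⟨w, by simpa [sVerts] using h1, by simpa [sVerts] using h2⟩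

/-- inclusion-exclusion at a pair of edges -/
lemma edge_pair (f g : G.edgeSet) :
    (if touches G (Sum.inr f) (Sum.inr g) then (1 : ℤ) else 0)
      + (if g = f then (1 : ℤ) else 0)
    = ∑ w : V, (if w ∈ (f : Sym2 V) then (1 : ℤ) else 0)
        * (if w ∈ (g : Sym2 V) then (1 : ℤ) else 0) := by
  by_cases hg : g = f
  · subst hg
    obtain ⟨w0, hw0⟩ := edge_mem_exists G g
    rw [if_pos ((touches_inr_inr G g g).mpr ⟨w0, hw0, hw0⟩), if_pos rfl]
    have : ∀ w : V, (if w ∈ (g : Sym2 V) then (1 : ℤ) else 0)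
        * (if w ∈ (g : Sym2 V) then (1 : ℤ) else 0)
        = (if w ∈ (g : Sym2 V) then (1 : ℤ) else 0) := by
      intro w; by_cases h : w ∈ (g : Sym2 V) <;> simp [h]
    rw [Finset.sum_congr rfl fun w _ => this w, two_mem]
    norm_num
  · rw [if_neg hg]
    by_cases ht : touches G (Sum.inr f) (Sum.inr g)
    · obtain ⟨w0, hw0f, hw0g⟩ := (touches_inr_inr G f g).mp ht
      rw [if_pos ht]
      have key : ∀ w : V, (if w ∈ (f : Sym2 V) then (1 : ℤ) else 0)
          * (if w ∈ (g : Sym2 V) then (1 : ℤ) else 0)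
          = (if w = w0 then (1 : ℤ) else 0) := by
        intro w
        by_cases hw : w = w0
        · subst hw; simp [hw0f, hw0g]
        · by_cases h1 : w ∈ (f : Sym2 V)
          · by_cases h2 : w ∈ (g : Sym2 V)
            · exfalso
              apply hg
              exact Subtype.ext (Sym2.eq_of_ne_mem hw h1 hw0f h2 hw0g).symm
            · simp [h2, hw]
          · simp [h1, hw]
      rw [Finset.sum_congr rfl fun w _ => key w]
      simp
    · rw [if_neg ht]
      symm
      apply Finset.sum_eq_zero
      intro w _
      by_cases h1 : w ∈ (f : Sym2 V)
      · have h2 : ¬ w ∈ (g : Sym2 V) := fun h2 =>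
          ht ((touches_inr_inr G f g).mpr ⟨w, h1, h2⟩)
        simp [h2]
      · simp [h1]

/-- row sums of M = |d| + |d|ᵀ -/
lemma rowM_inl (u : V) :
    ∑ y : Simplex G, (absd G + (absd G)ᵀ) (Sum.inl u) y = degI G u := by
  rw [Fintype.sum_sum_type]
  have h1 : ∀ w : V, (absd G + (absd G)ᵀ) (Sum.inl u) (Sum.inl w) = 0 := by
    intro w; simp [absd, Matrix.add_apply, Matrix.transpose_apply]
  have h2 : ∀ f : G.edgeSet, (absd G + (absd G)ᵀ) (Sum.inl u) (Sum.inr f)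
      = if u ∈ (f : Sym2 V) then (1 : ℤ) else 0 := by
    intro f; simp [absd, Matrix.add_apply, Matrix.transpose_apply]
  simp only [h1, h2, Finset.sum_const_zero, zero_add]
  rfl

lemma rowM_inr (f : G.edgeSet) :
    ∑ y : Simplex G, (absd G + (absd G)ᵀ) (Sum.inr f) y = 2 := by
  rw [Fintype.sum_sum_type]
  have h1 : ∀ w : V, (absd G + (absd G)ᵀ) (Sum.inr f) (Sum.inl w)
      = if w ∈ (f : Sym2 V) then (1 : ℤ) else 0 := by
    intro w; simp [absd, Matrix.add_apply, Matrix.transpose_apply]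
  have h2 : ∀ g : G.edgeSet, (absd G + (absd G)ᵀ) (Sum.inr f) (Sum.inr g) = 0 := by
    intro g; simp [absd, Matrix.add_apply, Matrix.transpose_apply]
  simp only [h1, h2, Finset.sum_const_zero, add_zero]
  exact two_mem G f

lemma rowH (x : Simplex G) :
    ∑ y : Simplex G, absH G x y
      = ∑ z : Simplex G, (absd G + (absd G)ᵀ) x z
          * (∑ y : Simplex G, (absd G + (absd G)ᵀ) z y) := by
  have : absH G = (absd G + (absd G)ᵀ) * (absd G + (absd G)ᵀ) := by
    rw [absH, sq]
  rw [this]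
  simp only [Matrix.mul_apply]
  rw [Finset.sum_comm]
  exact Finset.sum_congr rfl fun z _ => by rw [Finset.mul_sum]

lemma rowH_inl (u : V) :
    ∑ y : Simplex G, absH G (Sum.inl u) y = 2 * degI G u := by
  rw [rowH, Fintype.sum_sum_type]
  have h1 : ∀ w : V, (absd G + (absd G)ᵀ) (Sum.inl u) (Sum.inl w) = 0 := by
    intro w; simp [absd, Matrix.add_apply, Matrix.transpose_apply]
  have h2 : ∀ f : G.edgeSet, (absd G + (absd G)ᵀ) (Sum.inl u) (Sum.inr f)
      = if u ∈ (f : Sym2 V) then (1 : ℤ) else 0 := by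
    intro f; simp [absd, Matrix.add_apply, Matrix.transpose_apply]
  simp only [h1, h2, zero_mul, Finset.sum_const_zero, zero_add, rowM_inr]
  rw [degI, Finset.mul_sum]
  exact Finset.sum_congr rfl fun f _ => mul_comm _ _

lemma rowH_inr (f : G.edgeSet) :
    ∑ y : Simplex G, absH G (Sum.inr f) y
      = ∑ w : V, (if w ∈ (f : Sym2 V) then (1 : ℤ) else 0) * degI G w := by
  rw [rowH, Fintype.sum_sum_type]
  have h1 : ∀ w : V, (absd G + (absd G)ᵀ) (Sum.inr f) (Sum.inl w)
      = if w ∈ (f : Sym2 V) then (1 : ℤ) else 0 := by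
    intro w; simp [absd, Matrix.add_apply, Matrix.transpose_apply]
  have h2 : ∀ g : G.edgeSet, (absd G + (absd G)ᵀ) (Sum.inr f) (Sum.inr g) = 0 := by
    intro g; simp [absd, Matrix.add_apply, Matrix.transpose_apply]
  simp only [h1, h2, zero_mul, Finset.sum_const_zero, add_zero, rowM_inl]

lemma rowL_inl (u : V) :
    ∑ y : Simplex G, connL G (Sum.inl u) y = 1 + degI G u := by
  rw [Fintype.sum_sum_type]
  have h1 : ∀ w : V, connL G (Sum.inl u) (Sum.inl w)
      = if u = w then (1 : ℤ) else 0 := by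
    intro w; simp only [connL, Matrix.of_apply]
    by_cases h : u = w <;> simp [h, touches_inl_inl]
  have h2 : ∀ f : G.edgeSet, connL G (Sum.inl u) (Sum.inr f)
      = if u ∈ (f : Sym2 V) then (1 : ℤ) else 0 := by
    intro f; simp only [connL, Matrix.of_apply]
    by_cases h : u ∈ (f : Sym2 V) <;> simp [h, touches_inl_inr]
  simp only [h1, h2]
  rw [Finset.sum_ite_eq (Finset.univ) u (fun _ => (1:ℤ))]
  simp [degI]

lemma rowL_inr (f : G.edgeSet) :
    ∑ y : Simplex G, connL G (Sum.inr f) y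
      = 1 + ∑ w : V, (if w ∈ (f : Sym2 V) then (1 : ℤ) else 0) * degI G w := by
  rw [Fintype.sum_sum_type]
  have h1 : ∀ w : V, connL G (Sum.inr f) (Sum.inl w)
      = if w ∈ (f : Sym2 V) then (1 : ℤ) else 0 := by
    intro w; simp only [connL, Matrix.of_apply]
    by_cases h : w ∈ (f : Sym2 V) <;> simp [h, touches_inr_inl]
  have key : ∑ g : G.edgeSet, connL G (Sum.inr f) (Sum.inr g)
      = (∑ w : V, (if w ∈ (f : Sym2 V) then (1 : ℤ) else 0) * degI G w) - 1 := by
    have := Finset.sum_congr rfl fun g (_ : g ∈ (Finset.univ : Finset G.edgeSet)) =>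
      edge_pair G f g
    rw [Finset.sum_add_distrib] at this
    have hL : ∑ g : G.edgeSet, (if g = f then (1 : ℤ) else 0) = 1 := by
      simp
    have hR : ∑ g : G.edgeSet, ∑ w : V,
        (if w ∈ (f : Sym2 V) then (1 : ℤ) else 0) * (if w ∈ (g : Sym2 V) then (1 : ℤ) else 0)
        = ∑ w : V, (if w ∈ (f : Sym2 V) then (1 : ℤ) else 0) * degI G w := by
      rw [Finset.sum_comm]
      exact Finset.sum_congr rfl fun w _ => by rw [degI, Finset.mul_sum]
    have hc : ∀ g : G.edgeSet, connL G (Sum.inr f) (Sum.inr g)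
        = if touches G (Sum.inr f) (Sum.inr g) then (1 : ℤ) else 0 := fun g => rfl
    simp only [hc]
    rw [hL, hR] at this
    linarith
  simp only [h1, key, two_mem G f]
  ring

/-- Energy theorem in dimension one: the total sum of the entries of the inverse
`L⁻¹ = L - |H|` of the connection Laplacian equals the Euler characteristic `v - e`. -/
theorem energy_theorem :
    ∑ x : Simplex G, ∑ y : Simplex G, (connL G - absH G) x y
      = (Fintype.card V : ℤ) - (Fintype.card G.edgeSet : ℤ) := by
  have hsub : ∀ x : Simplex G, ∑ y : Simplex G, (connL G - absH G) x y
      = (∑ y : Simplex G, connL G x y) - ∑ y : Simplex G, absH G x y := by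
    intro x
    rw [← Finset.sum_sub_distrib]
    rfl
  rw [Fintype.sum_sum_type]
  have hV : ∀ u : V, ∑ y : Simplex G, (connL G - absH G) (Sum.inl u) y
      = 1 - degI G u := by
    intro u; rw [hsub, rowL_inl, rowH_inl]; ring
  have hE : ∀ f : G.edgeSet, ∑ y : Simplex G, (connL G - absH G) (Sum.inr f) y = 1 := by
    intro f; rw [hsub, rowL_inr, rowH_inr]; ring
  simp only [hV, hE]
  have hhand : ∑ u : V, degI G u = 2 * (Fintype.card G.edgeSet : ℤ) := by
    simp only [degI]
    rw [Finset.sum_comm]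
    simp only [two_mem G]
    simp [Finset.card_univ, mul_comm]
  rw [Finset.sum_sub_distrib, hhand]
  simp [Finset.card_univ]
  ring
end

section
/- Spectral symmetry in dimension one: regarding the connection Laplacian L as a complex matrix, the multiset of roots (with multiplicity) of the characteristic polynomial of L² is invariant under the map z ↦ z⁻¹; equivalently, L² and L⁻² are isospectral. -/
open Matrix Polynomial

variable {V : Type*} [Fintype V] [DecidableEq V]

variable (G : SimpleGraph V) [DecidableRel G.Adj]

/-- The (unsigned) vertex-edge incidence matrix over ℂ. -/
def Bmat : Matrix V G.edgeSet ℂ :=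
  Matrix.of fun u f => if u ∈ (f : Sym2 V) then 1 else 0

lemma edge_card (f g : G.edgeSet) :
    (Finset.univ.filter fun u : V => u ∈ (f : Sym2 V) ∧ u ∈ (g : Sym2 V)).card
      = (if touches G (Sum.inr f) (Sum.inr g) then 1 else 0) + (if f = g then 1 else 0) := by
  have htouch : touches G (Sum.inr f) (Sum.inr g) ↔
      ∃ u, u ∈ (f : Sym2 V) ∧ u ∈ (g : Sym2 V) := by
    simp [touches, sVerts]
  by_cases hfg : f = g
  · subst hfg
    obtain ⟨fs, hfs⟩ := f
    induction fs using Sym2.ind with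
    | _ a b =>
      have hab : a ≠ b := (G.mem_edgeSet.mp hfs).ne
      have hfilter : (Finset.univ.filter fun u : V =>
          u ∈ (s(a, b) : Sym2 V) ∧ u ∈ (s(a, b) : Sym2 V)) = {a, b} := by
        ext u; simp [Sym2.mem_iff]
      have : touches G (Sum.inr ⟨s(a,b), hfs⟩) (Sum.inr ⟨s(a,b), hfs⟩) := by
        rw [htouch]; exact ⟨a, by simp, by simp⟩
      simp only [hfilter, if_pos this, if_pos rfl, if_true]
      rw [Finset.card_pair hab]
  · by_cases ht : touches G (Sum.inr f) (Sum.inr g)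
    · obtain ⟨u0, hu0f, hu0g⟩ := htouch.mp ht
      have hfilter : (Finset.univ.filter fun u : V =>
          u ∈ (f : Sym2 V) ∧ u ∈ (g : Sym2 V)) = {u0} := by
        ext u
        simp only [Finset.mem_filter, Finset.mem_univ, true_and, Finset.mem_singleton]
        constructor
        · rintro ⟨huf, hug⟩
          by_contra hne
          exact hfg (Subtype.ext (Sym2.eq_of_ne_mem hne huf hu0f hug hu0g))
        · rintro rfl; exact ⟨hu0f, hu0g⟩
      simp [hfilter, ht, hfg]
    · have hfilter : (Finset.univ.filter fun u : V =>
          u ∈ (f : Sym2 V) ∧ u ∈ (g : Sym2 V)) = ∅ := by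
        ext u
        simp only [Finset.mem_filter, Finset.mem_univ, true_and, Finset.notMem_empty,
          iff_false]
        rintro ⟨huf, hug⟩
        exact ht (htouch.mpr ⟨u, huf, hug⟩)
      simp [hfilter, ht, hfg]

lemma connL_blocks :
    (connL G).map (Int.cast : ℤ → ℂ)
      = fromBlocks 1 (Bmat G) (Bmat G)ᵀ ((Bmat G)ᵀ * Bmat G - 1) := by
  ext x y
  cases x with
  | inl u =>
    cases y with
    | inl w =>
      by_cases h : u = w <;>
        simp [connL, touches, sVerts, Bmat, Matrix.one_apply, h, fromBlocks]
    | inr f =>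
      simp [connL, touches, sVerts, Bmat, fromBlocks]
  | inr f =>
    cases y with
    | inl u =>
      simp [connL, touches, sVerts, Bmat, fromBlocks]
    | inr g =>
      have hcard := edge_card G f g
      have hsum : ((Bmat G)ᵀ * Bmat G) f g
          = ((Finset.univ.filter fun u : V => u ∈ (f : Sym2 V) ∧ u ∈ (g : Sym2 V)).card : ℂ) := by
        rw [Matrix.mul_apply]
        simp only [Matrix.transpose_apply, Bmat, Matrix.of_apply]
        rw [← Finset.sum_boole]
        refine Finset.sum_congr rfl fun u _ => ?_
        by_cases h1 : u ∈ (f : Sym2 V) <;> by_cases h2 : u ∈ (g : Sym2 V) <;>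
          simp [h1, h2]
      simp only [Matrix.map_apply, connL, Matrix.of_apply, fromBlocks, Sum.elim_inr,
        Matrix.sub_apply, Matrix.one_apply, hsum, hcard]
      push_cast
      by_cases ht : touches G (Sum.inr f) (Sum.inr g) <;> by_cases hfg : f = g <;>
        simp [ht, hfg]

lemma eval_charpoly' {m : Type*} [Fintype m] [DecidableEq m] (M : Matrix m m ℂ) (x : ℂ) :
    M.charpoly.eval x = Matrix.det (x • (1 : Matrix m m ℂ) - M) := by
  rw [Matrix.charpoly, show (Polynomial.eval x : ℂ[X] → ℂ) = ⇑(Polynomial.evalRingHom x) from rfl,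
    RingHom.map_det]
  congr 1
  ext i j
  by_cases h : i = j <;>
    simp [Matrix.charmatrix_apply, Matrix.one_apply, Matrix.diagonal_apply, h]

-- abbreviations
noncomputable def Amat : Matrix (Simplex G) (Simplex G) ℂ :=
  (connL G).map (Int.cast : ℤ → ℂ)

noncomputable def Kmat : Matrix G.edgeSet G.edgeSet ℂ := (Bmat G)ᵀ * Bmat G

noncomputable def Dfun (w : ℂ) : ℂ :=
  Matrix.det (w • (1 : Matrix (Simplex G) (Simplex G) ℂ) - Amat G)

noncomputable def Qfun (w : ℂ) : ℂ :=
  Matrix.det ((w ^ 2 - 1) • (1 : Matrix G.edgeSet G.edgeSet ℂ) - w • Kmat G)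

lemma key_one (w : ℂ) :
    (w - 1) ^ Fintype.card G.edgeSet * Dfun G w
      = (w - 1) ^ Fintype.card V * Qfun G w := by
  classical
  set B := Bmat G with hB
  have h1 : w • (1 : Matrix (Simplex G) (Simplex G) ℂ) - Amat G
      = fromBlocks ((w - 1) • 1) (-B) (-Bᵀ) ((w + 1) • 1 - Bᵀ * B) := by
    rw [Amat, connL_blocks, ← Matrix.fromBlocks_one, Matrix.fromBlocks_smul,
      sub_eq_add_neg, Matrix.fromBlocks_neg, Matrix.fromBlocks_add]
    refine Matrix.ext fun i j => ?_
    have e1 : w • (1 : Matrix V V ℂ) + -1 = (w - 1) • 1 := by module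
    have e2 : w • (0 : Matrix V G.edgeSet ℂ) + -B = -B := by module
    have e3 : w • (0 : Matrix G.edgeSet V ℂ) + -Bᵀ = -Bᵀ := by module
    have e4 : w • (1 : Matrix G.edgeSet G.edgeSet ℂ) + -(Bᵀ * B - 1)
        = (w + 1) • 1 - Bᵀ * B := by module
    rw [e1, e2, e3, e4]
  have h2 : (w • (1 : Matrix (Simplex G) (Simplex G) ℂ) - Amat G)
        * fromBlocks 1 B 0 ((w - 1) • 1)
      = fromBlocks ((w - 1) • 1) 0 (-Bᵀ) ((w ^ 2 - 1) • 1 - w • Kmat G) := by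
    rw [h1, Matrix.fromBlocks_multiply]
    have hK : Kmat G = Bᵀ * B := by rw [hB]; rfl
    have b1 : (w - 1) • (1 : Matrix V V ℂ) * 1 + -B * (0 : Matrix G.edgeSet V ℂ)
        = (w - 1) • 1 := by simp
    have b2 : (w - 1) • (1 : Matrix V V ℂ) * B
        + -B * ((w - 1) • (1 : Matrix G.edgeSet G.edgeSet ℂ)) = 0 := by
      simp [smul_mul_assoc, mul_smul_comm]
    have b3 : -Bᵀ * (1 : Matrix V V ℂ)
        + ((w + 1) • (1 : Matrix G.edgeSet G.edgeSet ℂ) - Bᵀ * B) * (0 : Matrix G.edgeSet V ℂ)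
        = -Bᵀ := by simp
    have b4 : -Bᵀ * B + ((w + 1) • (1 : Matrix G.edgeSet G.edgeSet ℂ) - Bᵀ * B)
          * ((w - 1) • (1 : Matrix G.edgeSet G.edgeSet ℂ))
        = (w ^ 2 - 1) • 1 - w • Kmat G := by
      rw [hK]
      simp only [Matrix.neg_mul, Matrix.sub_mul, smul_mul_assoc, mul_smul_comm,
        Matrix.one_mul, Matrix.mul_one, smul_smul]
      module
    rw [b1, b2, b3, b4]
  have hd := congrArg Matrix.det h2
  rw [Matrix.det_mul, Matrix.det_fromBlocks_zero₂₁, Matrix.det_fromBlocks_zero₁₂] at hd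
  simp only [Matrix.det_one, one_mul, Matrix.det_smul, smul_eq_mul] at hd
  rw [Dfun, Qfun]
  linear_combination hd

lemma key_three (w : ℂ) (hw : w ≠ 0) :
    (w ^ 2) ^ Fintype.card G.edgeSet * Qfun G w⁻¹
      = (-1) ^ Fintype.card G.edgeSet * Qfun G (-w) := by
  have h1 : (w ^ 2) • (((w⁻¹) ^ 2 - 1) • (1 : Matrix G.edgeSet G.edgeSet ℂ) - w⁻¹ • Kmat G)
      = -(((-w) ^ 2 - 1) • (1 : Matrix G.edgeSet G.edgeSet ℂ) - (-w) • Kmat G) := by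
    match_scalars <;> field_simp <;> ring
  have := congrArg Matrix.det h1
  rw [Matrix.det_smul, Matrix.det_neg] at this
  unfold Qfun
  exact this

lemma neg_one_pow_sq (k : ℕ) : ((-1 : ℂ) ^ k) * ((-1 : ℂ) ^ k) = 1 := by
  rw [← mul_pow]; norm_num

lemma detA_sq : Matrix.det (Amat G) ^ 2 = 1 := by
  have h := key_one G 0
  have h0 : (0 : ℂ) • (1 : Matrix (Simplex G) (Simplex G) ℂ) - Amat G = -Amat G := by simp
  have hQ : Qfun G 0 = (-1) ^ Fintype.card G.edgeSet := by
    unfold Qfun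
    rw [show ((0:ℂ) ^ 2 - 1) • (1 : Matrix G.edgeSet G.edgeSet ℂ) - (0:ℂ) • Kmat G
        = -(1 : Matrix G.edgeSet G.edgeSet ℂ) by module, Matrix.det_neg, Matrix.det_one, mul_one]
  rw [Dfun, h0, Matrix.det_neg, hQ, show (0:ℂ) - 1 = -1 by norm_num] at h
  -- h : (-1)^e * ((-1)^n * det A) = (-1)^v * (-1)^e
  have hn := neg_one_pow_sq (Fintype.card (Simplex G))
  have he := neg_one_pow_sq (Fintype.card G.edgeSet)
  have hd : Matrix.det (Amat G)
      = (-1:ℂ) ^ Fintype.card V * (-1:ℂ) ^ Fintype.card (Simplex G) := by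
    linear_combination ((-1:ℂ) ^ Fintype.card G.edgeSet
        * (-1:ℂ) ^ Fintype.card (Simplex G)) * h
      + ((-1:ℂ) ^ Fintype.card (Simplex G) * (-1:ℂ) ^ Fintype.card V
        - (-1:ℂ) ^ Fintype.card (Simplex G) * (-1:ℂ) ^ Fintype.card (Simplex G)
          * Matrix.det (Amat G)) * he
      - Matrix.det (Amat G) * hn
  have hsq : ∀ k : ℕ, ((-1 : ℂ) ^ k) ^ 2 = 1 := fun k => by
    rw [← pow_mul, mul_comm, pow_mul]; norm_num
  rw [hd, mul_pow, hsq, hsq, one_mul]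

lemma eval_sq (x : ℂ) :
    (Matrix.charpoly (Amat G ^ 2)).eval (x ^ 2)
      = Dfun G x * ((-1) ^ Fintype.card (Simplex G) * Dfun G (-x)) := by
  rw [eval_charpoly']
  have t1 : (x • (1 : Matrix (Simplex G) (Simplex G) ℂ)) * (x • 1) = (x * x) • 1 := by
    rw [smul_mul_assoc, mul_smul_comm, smul_smul, Matrix.one_mul]
  have t2 : (x • (1 : Matrix (Simplex G) (Simplex G) ℂ)) * Amat G = x • Amat G := by
    rw [smul_mul_assoc, Matrix.one_mul]
  have t3 : Amat G * (x • (1 : Matrix (Simplex G) (Simplex G) ℂ)) = x • Amat G := by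
    rw [mul_smul_comm, Matrix.mul_one]
  have hfac : (x ^ 2) • (1 : Matrix (Simplex G) (Simplex G) ℂ) - Amat G ^ 2
      = (x • 1 - Amat G) * (x • 1 + Amat G) := by
    rw [show Amat G ^ 2 = Amat G * Amat G from pow_two _, sub_mul, mul_add, mul_add, t1, t2, t3]
    module
  rw [hfac, Matrix.det_mul, Dfun, Dfun]
  have hneg : x • (1 : Matrix (Simplex G) (Simplex G) ℂ) + Amat G
      = -((-x) • 1 - Amat G) := by module
  rw [hneg, Matrix.det_neg]

lemma pairs (x : ℂ) :
    (1 - x ^ 2) ^ Fintype.card G.edgeSet * (Dfun G x * Dfun G (-x))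
      = (1 - x ^ 2) ^ Fintype.card V * (Qfun G x * Qfun G (-x)) := by
  have k1 := key_one G x
  have k2 := key_one G (-x)
  have hm : ((x - 1) ^ Fintype.card G.edgeSet * Dfun G x)
        * ((-x - 1) ^ Fintype.card G.edgeSet * Dfun G (-x))
      = ((x - 1) ^ Fintype.card V * Qfun G x)
        * ((-x - 1) ^ Fintype.card V * Qfun G (-x)) := by rw [k1, k2]
  have re : (x - 1) ^ Fintype.card G.edgeSet * (-x - 1) ^ Fintype.card G.edgeSet
      = (1 - x ^ 2) ^ Fintype.card G.edgeSet := by rw [← mul_pow]; congr 1; ring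
  have rv : (x - 1) ^ Fintype.card V * (-x - 1) ^ Fintype.card V
      = (1 - x ^ 2) ^ Fintype.card V := by rw [← mul_pow]; congr 1; ring
  linear_combination hm - (Dfun G x * Dfun G (-x)) * re + (Qfun G x * Qfun G (-x)) * rv

lemma dagger (w : ℂ) (hw0 : w ≠ 0) (hw1 : w ^ 2 ≠ 1) :
    (w ^ 2) ^ Fintype.card (Simplex G) * (Dfun G w⁻¹ * Dfun G (-w⁻¹))
      = (-1) ^ Fintype.card (Simplex G) * (Dfun G w * Dfun G (-w)) := by
  classical
  set v := Fintype.card V with hv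
  set e := Fintype.card G.edgeSet with he
  have hn : Fintype.card (Simplex G) = v + e := Fintype.card_sum
  rw [hn]
  have hs : (1 : ℂ) - w ^ 2 ≠ 0 := sub_ne_zero.mpr (Ne.symm hw1)
  have c1 := pairs G w
  have c2 := pairs G w⁻¹
  have k5 := key_three G w hw0
  have k6 := key_three G (-w) (neg_ne_zero.mpr hw0)
  rw [inv_neg, neg_sq, neg_neg] at k6
  have n1sq := neg_one_pow_sq e
  have c3 : ((w ^ 2) ^ e * Qfun G w⁻¹) * ((w ^ 2) ^ e * Qfun G (-w⁻¹))
      = Qfun G (-w) * Qfun G w := by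
    rw [k5, k6]
    linear_combination (Qfun G (-w) * Qfun G w) * n1sq
  have r3e : (w ^ 2) ^ e * (1 - (w⁻¹) ^ 2) ^ e = (w ^ 2 - 1) ^ e := by
    rw [← mul_pow]; congr 1; field_simp
  have r3v : (w ^ 2) ^ v * (1 - (w⁻¹) ^ 2) ^ v = (w ^ 2 - 1) ^ v := by
    rw [← mul_pow]; congr 1; field_simp
  have r4e : (w ^ 2 - 1) ^ e = (-1 : ℂ) ^ e * (1 - w ^ 2) ^ e := by
    rw [← mul_pow]; congr 1; ring
  have r4v : (w ^ 2 - 1) ^ v = (-1 : ℂ) ^ v * (1 - w ^ 2) ^ v := by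
    rw [← mul_pow]; congr 1; ring
  have big : (1 - w ^ 2) ^ e * ((w ^ 2) ^ (v + e) * (Dfun G w⁻¹ * Dfun G (-w⁻¹)))
      = (1 - w ^ 2) ^ e * (((-1 : ℂ) ^ v * (-1 : ℂ) ^ e) * (Dfun G w * Dfun G (-w))) := by
    linear_combination
      - ((-1:ℂ) ^ e * w ^ (2*v+2*e) * (Dfun G w⁻¹ * Dfun G (-w⁻¹))) * r4e
      - ((-1:ℂ) ^ e * w ^ (2*v+2*e) * (Dfun G w⁻¹ * Dfun G (-w⁻¹))) * r3e
      + ((-1:ℂ) ^ e * w ^ (2*v+4*e)) * c2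
      + ((-1:ℂ) ^ e * w ^ (4*e) * (Qfun G w⁻¹ * Qfun G (-w⁻¹))) * r3v
      + ((-1:ℂ) ^ e * (w ^ 2 - 1) ^ v) * c3
      + ((-1:ℂ) ^ e * (Qfun G w * Qfun G (-w))) * r4v
      - ((-1:ℂ) ^ e * (-1:ℂ) ^ v) * c1
      - ((1 - w ^ 2) ^ e * w ^ (2*v+2*e) * (Dfun G w⁻¹ * Dfun G (-w⁻¹))) * n1sq
  have hc := mul_left_cancel₀ (pow_ne_zero e hs) big
  rw [hc]
  ring

lemma star (z : ℂ) (hz0 : z ≠ 0) (hz1 : z ≠ 1) :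
    (Matrix.charpoly (Amat G ^ 2)).eval z
      = (-1) ^ Fintype.card (Simplex G) * z ^ Fintype.card (Simplex G)
        * (Matrix.charpoly (Amat G ^ 2)).eval z⁻¹ := by
  obtain ⟨w, hw⟩ := IsAlgClosed.exists_pow_nat_eq z (by norm_num : 0 < 2)
  subst hw
  have hw0 : w ≠ 0 := fun h => hz0 (by simp [h])
  set n := Fintype.card (Simplex G)
  have h1 := eval_sq G w
  have h2 := eval_sq G w⁻¹
  rw [inv_pow] at h2
  rw [h1, h2]
  have hd := dagger G w hw0 hz1
  have hsqn := neg_one_pow_sq n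
  have d2 : (w ^ 2) ^ n * ((-1 : ℂ) ^ n) * (Dfun G w⁻¹ * Dfun G (-w⁻¹))
      = Dfun G w * Dfun G (-w) := by
    linear_combination ((-1 : ℂ) ^ n) * hd + (Dfun G w * Dfun G (-w)) * hsqn
  linear_combination (-(-1 : ℂ) ^ n) * d2

/-- Spectral symmetry in dimension one: the multiset of complex eigenvalues
(roots of the characteristic polynomial, with multiplicity) of `L²` is invariant
under `z ↦ z⁻¹`; i.e. `L²` and `L⁻²` are isospectral. -/
theorem spectral_symmetry :
    (Matrix.charpoly (((connL G).map (Int.cast : ℤ → ℂ)) ^ 2)).roots.map (fun z => z⁻¹)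
      = (Matrix.charpoly (((connL G).map (Int.cast : ℤ → ℂ)) ^ 2)).roots := by
  classical
  have hA : ((connL G).map (Int.cast : ℤ → ℂ)) = Amat G := rfl
  rw [hA]
  set n := Fintype.card (Simplex G) with hn
  set p := Matrix.charpoly (Amat G ^ 2) with hp
  have hmonic : p.Monic := Matrix.charpoly_monic _
  have hsplits : p.Splits := IsAlgClosed.splits p
  have hdeg : p.natDegree = n := Matrix.charpoly_natDegree_eq_dim _
  have hcard : Multiset.card p.roots = n := by
    rw [(Polynomial.splits_iff_card_roots).mp hsplits, hdeg]
  have hdet : Matrix.det (Amat G ^ 2) = 1 := by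
    rw [Matrix.det_pow]; exact detA_sq G
  have hsqn := neg_one_pow_sq n
  have hprod : p.roots.prod = 1 := by
    have h0 := hsplits.coeff_zero_eq_prod_roots_of_monic hmonic
    have h1 := Matrix.det_eq_sign_charpoly_coeff (Amat G ^ 2)
    rw [hdet, ← hp, h0, hdeg] at h1
    linear_combination (-1 : ℂ) * h1 - p.roots.prod * hsqn
  have hzero : ∀ a ∈ p.roots, a ≠ (0 : ℂ) := by
    intro a ha h0
    rw [h0] at ha
    have h := Multiset.prod_eq_zero ha
    rw [hprod] at h
    exact (one_ne_zero : (1 : ℂ) ≠ 0) h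
  have hfact : p = (p.roots.map fun a => X - C a).prod :=
    hsplits.eq_prod_roots_of_monic hmonic
  have main : ((p.roots.map fun z => z⁻¹).map fun a => X - C a).prod = p := by
    apply Polynomial.eq_of_infinite_eval_eq
    have hinf : (({0, 1} : Set ℂ)ᶜ).Infinite :=
      ((Set.finite_singleton (1 : ℂ)).insert 0).infinite_compl
    refine hinf.mono ?_
    intro z hz
    simp only [Set.mem_compl_iff, Set.mem_insert_iff, Set.mem_singleton_iff, not_or] at hz
    obtain ⟨hz0, hz1⟩ := hz
    show Polynomial.eval z ((p.roots.map fun z => z⁻¹).map fun a => X - C a).prod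
        = Polynomial.eval z p
    rw [Polynomial.eval_multiset_prod, Multiset.map_map, Multiset.map_map]
    have hstep : p.roots.map ((Polynomial.eval z ∘ fun a => X - C a) ∘ fun z => z⁻¹)
        = p.roots.map (fun a => a⁻¹ * ((-z) * (z⁻¹ - a))) := by
      apply Multiset.map_congr rfl
      intro a ha
      have ha0 : a ≠ 0 := hzero a ha
      simp only [Function.comp_apply, eval_sub, eval_X, eval_C]
      field_simp
      ring
    rw [hstep, Multiset.prod_map_mul]
    have f1 : (p.roots.map fun a : ℂ => a⁻¹).prod = 1 := by
      rw [show (fun a : ℂ => a⁻¹) = (Inv.inv : ℂ → ℂ) from rfl,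
        Multiset.prod_map_inv', hprod, inv_one]
    have f2 : (p.roots.map fun a : ℂ => (-z) * (z⁻¹ - a)).prod
        = (-z) ^ n * Polynomial.eval z⁻¹ p := by
      rw [Multiset.prod_map_mul]
      congr 1
      · rw [Multiset.map_const', Multiset.prod_replicate, hcard]
      · conv_rhs => rw [hfact]
        rw [Polynomial.eval_multiset_prod, Multiset.map_map]
        refine congrArg _ (Multiset.map_congr rfl fun a _ => ?_)
        simp
    rw [f1, f2, one_mul]
    rw [star G z hz0 hz1]
    rw [show (-z) ^ n = (-1 : ℂ) ^ n * z ^ n by rw [← mul_pow, neg_one_mul]]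
  have hro := congrArg Polynomial.roots main
  rw [Polynomial.roots_multiset_prod_X_sub_C] at hro
  exact hro
end

section
/- Random walk estimate: if G has at least one vertex, then for every integer k ≥ 1 and every eigenvalue μ of the Kirchhoff Laplacian H₀ of G, one has μ ≤ r_k − 1/r_k, where r_k = 1 + P(k)^{1/k} (real k-th root) and P(k) = max_{x∈S} ∑_{y∈S} (A'^k)(x,y) is the maximal number of paths of length k in the connection graph G' starting at a simplex x. -/
open Matrix

variable {V : Type*} [Fintype V] [DecidableEq V]

variable (G : SimpleGraph V) [DecidableRel G.Adj]

/-- The connection graph `G'`: two distinct simplices are adjacent iff their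
vertex sets intersect. -/
def connGraph : SimpleGraph (Simplex G) where
  Adj x y := x ≠ y ∧ touches G x y
  symm := ⟨by
    rintro x y ⟨hxy, w, h1, h2⟩
    exact ⟨Ne.symm hxy, w, h2, h1⟩⟩
  loopless := ⟨fun x h => h.1 rfl⟩

instance : DecidableRel (connGraph G).Adj :=
  fun x y => inferInstanceAs (Decidable (x ≠ y ∧ touches G x y))

/-- The Kirchhoff Laplacian of `G`: diagonal degree matrix minus adjacency matrix. -/
def kirchhoff : Matrix V V ℝ :=
  Matrix.diagonal (fun u => (G.degree u : ℝ)) - G.adjMatrix ℝ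

/-- `P G k`: the maximal number of paths of length `k` in the connection graph `G'`
starting at a simplex, computed from the `k`-th power of its adjacency matrix. -/
noncomputable def maxPaths (k : ℕ) : ℝ :=
  ⨆ x : Simplex G, ∑ y : Simplex G, (((connGraph G).adjMatrix ℝ) ^ k) x y

section AuxRayleigh


section Rayleigh
variable {n : Type*} [Fintype n] [DecidableEq n]

lemma ofReal_comp_eq (f : n → ℝ) : (RCLike.ofReal ∘ f : n → ℝ) = f := funext fun _ => rfl

/-- Rayleigh quotient upper bound for a real symmetric matrix. -/
lemma rayleigh_upper {Q : Matrix n n ℝ} (hQ : Q.IsHermitian) {c : ℝ}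
    (hc : ∀ i, hQ.eigenvalues i ≤ c) (v : n → ℝ) :
    Q *ᵥ v ⬝ᵥ v ≤ c * (v ⬝ᵥ v) := by
  classical
  set U : Matrix n n ℝ := (hQ.eigenvectorUnitary : Matrix n n ℝ) with hUdef
  have hU1 : U * star U = 1 := (Matrix.mem_unitaryGroup_iff).mp hQ.eigenvectorUnitary.2
  set x : n → ℝ := star U *ᵥ v with hxdef
  have hstar : star U = Uᵀ := Matrix.conjTranspose_eq_transpose_of_trivial U
  have hxx : x ⬝ᵥ x = v ⬝ᵥ v := by
    rw [hxdef, dotProduct_mulVec, hstar, vecMul_transpose, mulVec_mulVec, hstar.symm, hU1,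
      one_mulVec]
  have hQv : Q *ᵥ v = U *ᵥ (Matrix.diagonal hQ.eigenvalues *ᵥ x) := by
    conv_lhs => rw [hQ.spectral_theorem]
    rw [Unitary.conjStarAlgAut_apply, ofReal_comp_eq, ← mulVec_mulVec, ← mulVec_mulVec]
  have hdot : Q *ᵥ v ⬝ᵥ v = (Matrix.diagonal hQ.eigenvalues *ᵥ x) ⬝ᵥ x := by
    rw [hQv, dotProduct_comm, dotProduct_mulVec, ← mulVec_transpose, ← hstar, hxdef,
      dotProduct_comm]
  rw [hdot]
  have : (Matrix.diagonal hQ.eigenvalues *ᵥ x) ⬝ᵥ x = ∑ i, hQ.eigenvalues i * (x i * x i) := by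
    simp [dotProduct, mulVec_diagonal, mul_assoc]
  rw [this, ← hxx]
  have : c * (x ⬝ᵥ x) = ∑ i, c * (x i * x i) := by
    simp [dotProduct, Finset.mul_sum]
  rw [this]
  exact Finset.sum_le_sum fun i _ => mul_le_mul_of_nonneg_right (hc i) (mul_self_nonneg _)

end Rayleigh
end AuxRayleigh

section AuxGraph

/-- incidence matrix -/
def inc : Matrix V G.edgeSet ℝ :=
  Matrix.of fun u e => if u ∈ (e : Sym2 V) then 1 else 0

lemma inc_apply (u : V) (e : G.edgeSet) :
    inc G u e = if u ∈ (e : Sym2 V) then 1 else 0 := rfl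


lemma ite_one_mul_ite_one (p q : Prop) [Decidable p] [Decidable q] :
    (if p then (1:ℝ) else 0) * (if q then (1:ℝ) else 0) = if p ∧ q then 1 else 0 := by
  by_cases hp : p <;> by_cases hq : q <;> simp [hp, hq]

lemma sum_inc_diag (u : V) :
    ∑ e : G.edgeSet, inc G u e * inc G u e = (G.degree u : ℝ) := by
  have h1 : ∀ e : G.edgeSet, inc G u e * inc G u e
      = if u ∈ (e : Sym2 V) then (1:ℝ) else 0 := by
    intro e; rw [inc_apply]; split <;> simp
  rw [Finset.sum_congr rfl fun e _ => h1 e, Finset.sum_boole]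
  congr 1
  rw [← Fintype.card_subtype]
  have equiv1 : {e : G.edgeSet // u ∈ (e : Sym2 V)} ≃ G.incidenceSet u :=
    { toFun := fun x => ⟨x.1.1, x.1.2, x.2⟩
      invFun := fun y => ⟨⟨y.1, y.2.1⟩, y.2.2⟩
      left_inv := fun _ => rfl
      right_inv := fun _ => rfl }
  rw [Fintype.card_congr equiv1, SimpleGraph.card_incidenceSet_eq_degree]

lemma sum_inc_offdiag {u v : V} (huv : u ≠ v) :
    ∑ e : G.edgeSet, inc G u e * inc G v e = if G.Adj u v then (1:ℝ) else 0 := by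
  have h1 : ∀ e : G.edgeSet, inc G u e * inc G v e
      = if (e : Sym2 V) = s(u, v) then (1:ℝ) else 0 := by
    intro e
    rw [inc_apply, inc_apply, ite_one_mul_ite_one]
    congr 1
    simp only [eq_iff_iff]
    exact Sym2.mem_and_mem_iff huv
  rw [Finset.sum_congr rfl fun e _ => h1 e]
  by_cases hadj : G.Adj u v
  · have : ∀ e : G.edgeSet, ((e : Sym2 V) = s(u,v)) = (e = (⟨s(u,v), hadj⟩ : G.edgeSet)) := by
      intro e; simp [Subtype.ext_iff]
    simp_rw [this]
    rw [Finset.sum_ite_eq' Finset.univ (⟨s(u,v), hadj⟩ : G.edgeSet) (fun _ => (1:ℝ))]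
    simp [hadj]
  · rw [if_neg hadj]
    apply Finset.sum_eq_zero
    intro e _
    rw [if_neg]
    intro hcontra
    exact hadj (G.mem_edgeSet.mp (hcontra ▸ e.2))

lemma sum_inc_edge_diag (e : G.edgeSet) :
    ∑ u : V, inc G u e * inc G u e = 2 := by
  have h1 : ∀ u : V, inc G u e * inc G u e
      = if u ∈ (e : Sym2 V) then (1:ℝ) else 0 := by
    intro u; rw [inc_apply]; split <;> simp
  rw [Finset.sum_congr rfl fun u _ => h1 u, Finset.sum_boole]
  obtain ⟨E, hE⟩ := e
  induction E with
  | _ a b =>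
    have hab : a ≠ b := fun h => G.not_isDiag_of_mem_edgeSet hE (by simp [h])
    have : (Finset.univ.filter fun u => u ∈ (((⟨s(a,b), hE⟩ : G.edgeSet) : G.edgeSet) : Sym2 V))
        = ({a, b} : Finset V) := by
      ext u; simp [Sym2.mem_iff]
    rw [this, Finset.card_pair hab]
    norm_num

lemma sum_inc_edge_offdiag {e f : G.edgeSet} (hef : e ≠ f) :
    ∑ u : V, inc G u e * inc G u f
      = if touches G (Sum.inr e) (Sum.inr f) then (1:ℝ) else 0 := by
  have htou : touches G (Sum.inr e) (Sum.inr f) ↔ ∃ w, w ∈ (e : Sym2 V) ∧ w ∈ (f : Sym2 V) := by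
    simp [touches, sVerts]
  have h1 : ∀ u : V, inc G u e * inc G u f
      = if u ∈ (e : Sym2 V) ∧ u ∈ (f : Sym2 V) then (1:ℝ) else 0 := by
    intro u
    rw [inc_apply, inc_apply, ite_one_mul_ite_one]
  rw [Finset.sum_congr rfl fun u _ => h1 u]
  by_cases htouches : touches G (Sum.inr e) (Sum.inr f)
  · obtain ⟨u0, hu0e, hu0f⟩ := htou.mp htouches
    have key : ∀ u : V, (u ∈ (e : Sym2 V) ∧ u ∈ (f : Sym2 V)) ↔ u = u0 := by
      intro u
      constructor
      · rintro ⟨hue, huf⟩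
        by_contra hne
        have he' : (e : Sym2 V) = s(u, u0) := (Sym2.mem_and_mem_iff hne).mp ⟨hue, hu0e⟩
        have hf' : (f : Sym2 V) = s(u, u0) := (Sym2.mem_and_mem_iff hne).mp ⟨huf, hu0f⟩
        exact hef (Subtype.ext (he'.trans hf'.symm))
      · rintro rfl; exact ⟨hu0e, hu0f⟩
    simp_rw [key]
    rw [Finset.sum_ite_eq' Finset.univ u0 (fun _ => (1:ℝ))]
    simp [htouches]
  · rw [if_neg htouches]
    apply Finset.sum_eq_zero
    intro u _
    rw [if_neg]
    rintro ⟨hue, huf⟩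
    exact htouches (htou.mpr ⟨u, hue, huf⟩)

/-- abbreviations -/
noncomputable def Mmat : Matrix V V ℝ :=
  Matrix.diagonal (fun u => (G.degree u : ℝ)) + G.adjMatrix ℝ

lemma inc_mul_transpose : inc G * (inc G)ᵀ = Mmat G := by
  ext u v
  rw [Matrix.mul_apply]
  simp only [Matrix.transpose_apply]
  by_cases huv : u = v
  · subst huv
    rw [sum_inc_diag]
    simp [Mmat, SimpleGraph.adjMatrix_apply]
  · rw [sum_inc_offdiag G huv]
    simp [Mmat, Matrix.diagonal_apply_ne _ huv]

lemma connAdj_block :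
    (connGraph G).adjMatrix ℝ
      = Matrix.fromBlocks 0 (inc G) (inc G)ᵀ ((inc G)ᵀ * inc G - (2:ℝ) • 1) := by
  ext x y
  rcases x with u | e <;> rcases y with v | f
  · simp only [Matrix.fromBlocks_apply₁₁, Matrix.zero_apply, SimpleGraph.adjMatrix_apply]
    rw [if_neg]
    rintro ⟨hne, w, hw1, hw2⟩
    simp only [sVerts, Set.mem_singleton_iff] at hw1 hw2
    exact hne (congrArg Sum.inl (hw1.symm.trans hw2))
  · simp only [Matrix.fromBlocks_apply₁₂, SimpleGraph.adjMatrix_apply, inc_apply]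
    have hiff : (connGraph G).Adj (Sum.inl u) (Sum.inr f) ↔ u ∈ (f : Sym2 V) :=
      ⟨fun h => (touches_inl_inr G u f).mp h.2,
       fun h => ⟨Sum.inl_ne_inr, (touches_inl_inr G u f).mpr h⟩⟩
    simp [hiff]
  · simp only [Matrix.fromBlocks_apply₂₁, SimpleGraph.adjMatrix_apply, Matrix.transpose_apply,
      inc_apply]
    have hiff : (connGraph G).Adj (Sum.inr e) (Sum.inl v) ↔ v ∈ (e : Sym2 V) := by
      constructor
      · rintro ⟨hne, w, hw1, hw2⟩
        exact (touches_inl_inr G v e).mp ⟨w, hw2, hw1⟩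
      · intro h
        obtain ⟨w, hw1, hw2⟩ := (touches_inl_inr G v e).mpr h
        exact ⟨Sum.inr_ne_inl, w, hw2, hw1⟩
    simp [hiff]
  · simp only [Matrix.fromBlocks_apply₂₂, Matrix.sub_apply, Matrix.mul_apply,
      Matrix.transpose_apply, Matrix.smul_apply, Matrix.one_apply, SimpleGraph.adjMatrix_apply]
    by_cases hef : e = f
    · subst hef
      rw [Finset.sum_congr rfl fun u _ => rfl, sum_inc_edge_diag]
      simp [SimpleGraph.irrefl, connGraph]
    · rw [Finset.sum_congr rfl fun u _ => rfl, sum_inc_edge_offdiag G hef]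
      simp only [if_neg hef, smul_zero, sub_zero]
      have : (connGraph G).Adj (Sum.inr e) (Sum.inr f) ↔ touches G (Sum.inr e) (Sum.inr f) := by
        constructor
        · exact fun h => h.2
        · exact fun h => ⟨fun hc => hef (Sum.inr.inj hc), h⟩
      simp [this]

section MainAux

open Matrix

variable {n : Type*} [Fintype n] [DecidableEq n]

lemma pow_mulVec_eig {Q : Matrix n n ℝ} {w : n → ℝ} {a : ℝ} (h : Q *ᵥ w = a • w) (k : ℕ) :
    (Q ^ k) *ᵥ w = a ^ k • w := by
  induction k with
  | zero => simp
  | succ m ih =>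
    rw [pow_succ, ← Matrix.mulVec_mulVec, h, Matrix.mulVec_smul, ih, smul_smul, pow_succ]
    ring_nf

lemma pow_entries_nonneg {Q : Matrix n n ℝ} (hQ : ∀ i j, 0 ≤ Q i j) (k : ℕ) :
    ∀ i j, 0 ≤ (Q ^ k) i j := by
  induction k with
  | zero =>
    intro i j
    by_cases h : i = j <;> simp [pow_zero, Matrix.one_apply, h]
  | succ m ih =>
    intro i j
    rw [pow_succ, Matrix.mul_apply]
    exact Finset.sum_nonneg fun l _ => mul_nonneg (ih i l) (hQ l j)

end MainAux

section Main

lemma connAdj_hermitian : ((connGraph G).adjMatrix ℝ).IsHermitian := by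
  rw [Matrix.IsHermitian, Matrix.conjTranspose_eq_transpose_of_trivial]
  exact (connGraph G).transpose_adjMatrix

lemma Mmat_hermitian : (Mmat G).IsHermitian := by
  rw [← inc_mul_transpose, ← Matrix.conjTranspose_eq_transpose_of_trivial]
  exact Matrix.isHermitian_mul_conjTranspose_self _

lemma kirchhoff_abs_le (u v : V) : |kirchhoff G u v| ≤ Mmat G u v := by
  by_cases huv : u = v
  · subst huv
    simp [kirchhoff, Mmat, Matrix.diagonal_apply_eq, abs_of_nonneg, Nat.cast_nonneg]
  · simp only [kirchhoff, Mmat, Matrix.sub_apply, Matrix.add_apply,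
      Matrix.diagonal_apply_ne _ huv, zero_sub, abs_neg, zero_add,
      SimpleGraph.adjMatrix_apply]
    split <;> simp

end Main

end AuxGraph

set_option maxHeartbeats 1600000

/-- Random walk estimate: for every `k ≥ 1`, every eigenvalue `μ` of the Kirchhoff
Laplacian of `G` satisfies `μ ≤ r_k - 1/r_k` where `r_k = 1 + P(k)^(1/k)`. -/
theorem random_walk_estimate [Nonempty V] (k : ℕ) (hk : 1 ≤ k) (μ : ℝ)
    (hμ : ∃ w : V → ℝ, w ≠ 0 ∧ (kirchhoff G).mulVec w = μ • w) :
    μ ≤ (1 + (maxPaths G k) ^ ((1 : ℝ) / k))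
        - 1 / (1 + (maxPaths G k) ^ ((1 : ℝ) / k)) := by
  classical
  obtain ⟨w, hw0, hww⟩ := hμ
  haveI : Nonempty (Simplex G) := ⟨Sum.inl (Classical.arbitrary V)⟩
  have hkR : (k : ℝ) ≠ 0 := Nat.cast_ne_zero.mpr (by omega)
  have hA'nonneg : ∀ i j : Simplex G, 0 ≤ (connGraph G).adjMatrix ℝ i j := by
    intro i j; simp only [SimpleGraph.adjMatrix_apply]; split <;> norm_num
  have hApow := pow_entries_nonneg hA'nonneg k
  have hbdd : BddAbove (Set.range fun x : Simplex G =>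
      ∑ y : Simplex G, (((connGraph G).adjMatrix ℝ) ^ k) x y) :=
    Set.Finite.bddAbove (Set.finite_range _)
  have hfle : ∀ x : Simplex G,
      ∑ y : Simplex G, (((connGraph G).adjMatrix ℝ) ^ k) x y ≤ maxPaths G k :=
    fun x => le_ciSup hbdd x
  have hP0 : 0 ≤ maxPaths G k :=
    le_trans (Finset.sum_nonneg fun y _ => hApow _ y) (hfle (Classical.arbitrary _))
  set p : ℝ := (maxPaths G k) ^ ((1:ℝ)/k) with hpdef
  have hp0 : 0 ≤ p := Real.rpow_nonneg hP0 _
  have h1p : (0:ℝ) < 1 + p := by linarith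
  have hRHS0 : (0:ℝ) ≤ (1 + p) - 1/(1+p) := by
    have h1 : 1/(1+p) ≤ 1 := by rw [div_le_one h1p]; linarith
    linarith
  -- Step A : μ ≤ s where s is the top eigenvalue of the signless Laplacian
  have hM := Mmat_hermitian G
  obtain ⟨i0, -, hi0⟩ := Finset.exists_max_image Finset.univ hM.eigenvalues Finset.univ_nonempty
  set s : ℝ := hM.eigenvalues i0 with hsdef
  have hRayM : ∀ x : V → ℝ, Mmat G *ᵥ x ⬝ᵥ x ≤ s * (x ⬝ᵥ x) :=
    fun x => rayleigh_upper hM (fun i => hi0 i (Finset.mem_univ i)) x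
  have hwpos : 0 < w ⬝ᵥ w := by
    obtain ⟨u, hu⟩ := Function.ne_iff.mp hw0
    exact Finset.sum_pos' (fun v _ => mul_self_nonneg _)
      ⟨u, Finset.mem_univ u, mul_self_pos.mpr hu⟩
  have hKw : μ * (w ⬝ᵥ w) = (kirchhoff G *ᵥ w) ⬝ᵥ w := by
    rw [show kirchhoff G *ᵥ w = μ • w from hww, smul_dotProduct, smul_eq_mul]
  have habsw : (kirchhoff G *ᵥ w) ⬝ᵥ w ≤ (Mmat G *ᵥ fun u => |w u|) ⬝ᵥ (fun u => |w u|) := by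
    have lhs_eq : (kirchhoff G *ᵥ w) ⬝ᵥ w = ∑ u, ∑ v, kirchhoff G u v * w v * w u := by
      simp [dotProduct, Matrix.mulVec, Finset.sum_mul]
    have rhs_eq : (Mmat G *ᵥ fun u => |w u|) ⬝ᵥ (fun u => |w u|)
        = ∑ u, ∑ v, Mmat G u v * |w v| * |w u| := by
      simp [dotProduct, Matrix.mulVec, Finset.sum_mul]
    rw [lhs_eq, rhs_eq]
    refine Finset.sum_le_sum fun u _ => Finset.sum_le_sum fun v _ => ?_
    calc kirchhoff G u v * w v * w u ≤ |kirchhoff G u v * w v * w u| := le_abs_self _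
      _ = |kirchhoff G u v| * |w v| * |w u| := by rw [abs_mul, abs_mul]
      _ ≤ Mmat G u v * |w v| * |w u| := by
          have h := kirchhoff_abs_le G u v
          have h1 : (0:ℝ) ≤ |w v| := abs_nonneg _
          have h2 : (0:ℝ) ≤ |w u| := abs_nonneg _
          have := mul_le_mul_of_nonneg_right h h1
          exact mul_le_mul_of_nonneg_right this h2
  have habs2 : (fun u => |w u|) ⬝ᵥ (fun u => |w u|) = w ⬝ᵥ w := by
    simp [dotProduct, abs_mul_abs_self]
  have hμs : μ ≤ s := by
    have h := le_trans (le_of_eq hKw) (le_trans habsw (hRayM _))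
    rw [habs2] at h
    exact le_of_mul_le_mul_right h hwpos
  rcases le_or_gt s 0 with hs | hs
  · linarith
  -- main case : s > 0
  set y : V → ℝ := ⇑(hM.eigenvectorBasis i0) with hydef
  have hMy : Mmat G *ᵥ y = s • y := hM.mulVec_eigenvectorBasis i0
  clear_value s
  have hyy : y ⬝ᵥ y = 1 := by
    have h1 := hM.eigenvectorBasis.orthonormal.1 i0
    have h2 : (y ⬝ᵥ y)
        = @inner ℝ _ _ (hM.eigenvectorBasis i0) (hM.eigenvectorBasis i0) := by
      rw [PiLp.inner_apply]
      simp [dotProduct, RCLike.inner_apply, starRingEnd_apply, hydef, sq]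
    rw [h2, real_inner_self_eq_norm_mul_norm, h1]; norm_num
  have hNz : inc G *ᵥ ((inc G)ᵀ *ᵥ y) = s • y := by
    rw [Matrix.mulVec_mulVec, inc_mul_transpose, hMy]
  have hzz : ((inc G)ᵀ *ᵥ y) ⬝ᵥ ((inc G)ᵀ *ᵥ y) = s := by
    rw [Matrix.dotProduct_mulVec, Matrix.vecMul_transpose, hNz, smul_dotProduct,
      hyy, smul_eq_mul, mul_one]
  have hsq : Real.sqrt s > 0 := Real.sqrt_pos.mpr hs
  have hsval : Real.sqrt s * Real.sqrt s = s := Real.mul_self_sqrt hs.le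
  set ζ : G.edgeSet → ℝ := (Real.sqrt s)⁻¹ • ((inc G)ᵀ *ᵥ y) with hζdef
  have hζζ : ζ ⬝ᵥ ζ = 1 := by
    rw [hζdef, smul_dotProduct, dotProduct_smul, hzz, smul_eq_mul, smul_eq_mul]
    field_simp
    rw [sq, hsval]
  have hNNζ : ((inc G)ᵀ * inc G) *ᵥ ζ = s • ζ := by
    rw [hζdef, Matrix.mulVec_smul, ← Matrix.mulVec_mulVec, hNz, Matrix.mulVec_smul]
    exact smul_comm _ _ _
  have hNζNζ : (inc G *ᵥ ζ) ⬝ᵥ (inc G *ᵥ ζ) = s := by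
    rw [Matrix.dotProduct_mulVec, ← Matrix.mulVec_transpose, Matrix.mulVec_mulVec, hNNζ,
      smul_dotProduct, hζζ, smul_eq_mul, mul_one]
  -- the root r with r - 1/r = s
  set q : ℝ := Real.sqrt (s^2 + 4) with hqdef
  have hq2 : q * q = s^2 + 4 := Real.mul_self_sqrt (by positivity)
  have hqgt : 2 < q := by
    nlinarith [Real.sqrt_nonneg (s^2+4), hq2]
  clear_value q
  set r : ℝ := (s + q) / 2 with hrdef
  have hr1 : 1 < r := by rw [hrdef]; nlinarith
  have hr0 : 0 < r := by linarith
  have hrne : r ≠ 0 := ne_of_gt hr0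
  have hr1ne : r - 1 ≠ 0 := by intro h; nlinarith
  have hrs : r * r = s * r + 1 := by rw [hrdef]; field_simp; nlinarith [hq2]
  have hseq : s = r - r⁻¹ := by
    have : r⁻¹ * r = 1 := inv_mul_cancel₀ hrne
    nlinarith [hrs, this]
  set t : ℝ := (r - 1)⁻¹ with htdef
  -- the test vector
  set v : Simplex G → ℝ := Sum.elim (t • (inc G *ᵥ ζ)) ζ with hvdef
  have hA'v : (connGraph G).adjMatrix ℝ *ᵥ v
      = Sum.elim (inc G *ᵥ ζ) ((t * s + s - 2) • ζ) := by
    rw [hvdef, connAdj_block, Matrix.fromBlocks_mulVec]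
    simp only [Sum.elim_comp_inl, Sum.elim_comp_inr, Matrix.zero_mulVec, zero_add]
    refine congr_arg₂ Sum.elim rfl ?_
    rw [Matrix.sub_mulVec, Matrix.mulVec_smul, Matrix.mulVec_mulVec, hNNζ,
      Matrix.smul_mulVec, Matrix.one_mulVec]
    funext e
    simp only [Pi.add_apply, Pi.sub_apply, Pi.smul_apply, smul_eq_mul]
    ring
  have hvv : v ⬝ᵥ v = t * t * s + 1 := by
    rw [hvdef, sumElim_dotProduct_sumElim, smul_dotProduct,
      dotProduct_smul, hNζNζ, hζζ, smul_eq_mul, smul_eq_mul]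
    ring
  have hA'dot : ((connGraph G).adjMatrix ℝ *ᵥ v) ⬝ᵥ v = t * s + (t * s + s - 2) := by
    rw [hA'v, hvdef, sumElim_dotProduct_sumElim, dotProduct_smul,
      smul_dotProduct, hNζNζ, hζζ, smul_eq_mul, smul_eq_mul]
    ring
  -- Rayleigh lower bound for the top eigenvalue of A'
  have hA' := connAdj_hermitian G
  obtain ⟨j0, -, hj0⟩ := Finset.exists_max_image Finset.univ hA'.eigenvalues Finset.univ_nonempty
  set a : ℝ := hA'.eigenvalues j0 with hadef
  have hRayA : ((connGraph G).adjMatrix ℝ *ᵥ v) ⬝ᵥ v ≤ a * (v ⬝ᵥ v) :=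
    rayleigh_upper hA' (fun i => hj0 i (Finset.mem_univ i)) v
  have halg : t * s + (t * s + s - 2) = (r - 1) * (t * t * s + 1) := by
    rw [htdef, hseq]
    field_simp
    ring
  have hvvpos : 0 < t * t * s + 1 := by nlinarith [mul_self_nonneg t]
  have hra : r - 1 ≤ a := by
    rw [hA'dot, hvv, halg] at hRayA
    exact le_of_mul_le_mul_right (by linarith [hRayA]) hvvpos
  have ha0 : 0 < a := by linarith
  -- top eigenvalue of A' is at most P(k)^(1/k)
  have hwa : (connGraph G).adjMatrix ℝ *ᵥ ⇑(hA'.eigenvectorBasis j0)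
      = a • ⇑(hA'.eigenvectorBasis j0) := hA'.mulVec_eigenvectorBasis j0
  set W : Simplex G → ℝ := ⇑(hA'.eigenvectorBasis j0) with hWdef
  have hWne : ∃ x, W x ≠ 0 := by
    by_contra hcon
    push_neg at hcon
    apply hA'.eigenvectorBasis.orthonormal.ne_zero j0
    ext x
    exact hcon x
  obtain ⟨x1, hx1⟩ := hWne
  obtain ⟨x0, -, hx0⟩ := Finset.exists_max_image Finset.univ (fun x => |W x|)
    Finset.univ_nonempty
  have hx0pos : 0 < |W x0| :=
    lt_of_lt_of_le (abs_pos.mpr hx1) (hx0 x1 (Finset.mem_univ x1))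
  have hpowW : ((connGraph G).adjMatrix ℝ ^ k) *ᵥ W = a ^ k • W := pow_mulVec_eig hwa k
  have hkey : a ^ k * |W x0| ≤ maxPaths G k * |W x0| := by
    have h1 : a ^ k * |W x0| = |(((connGraph G).adjMatrix ℝ ^ k) *ᵥ W) x0| := by
      rw [hpowW]
      simp only [Pi.smul_apply, smul_eq_mul, abs_mul, abs_of_pos (pow_pos ha0 k)]
    rw [h1]
    calc |(((connGraph G).adjMatrix ℝ ^ k) *ᵥ W) x0|
        = |∑ z, ((connGraph G).adjMatrix ℝ ^ k) x0 z * W z| := by rw [Matrix.mulVec]; rfl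
      _ ≤ ∑ z, |((connGraph G).adjMatrix ℝ ^ k) x0 z * W z| := Finset.abs_sum_le_sum_abs _ _
      _ = ∑ z, ((connGraph G).adjMatrix ℝ ^ k) x0 z * |W z| := by
          refine Finset.sum_congr rfl fun z _ => ?_
          rw [abs_mul, abs_of_nonneg (hApow x0 z)]
      _ ≤ ∑ z, ((connGraph G).adjMatrix ℝ ^ k) x0 z * |W x0| :=
          Finset.sum_le_sum fun z _ =>
            mul_le_mul_of_nonneg_left (hx0 z (Finset.mem_univ z)) (hApow x0 z)
      _ = (∑ z, ((connGraph G).adjMatrix ℝ ^ k) x0 z) * |W x0| := by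
          rw [Finset.sum_mul]
      _ ≤ maxPaths G k * |W x0| :=
          mul_le_mul_of_nonneg_right (hfle x0) (le_of_lt hx0pos)
  have hak : a ^ k ≤ maxPaths G k := le_of_mul_le_mul_right hkey hx0pos
  have hap : a ≤ p := by
    have h1 : a = (a ^ k) ^ ((1:ℝ)/k) := by
      rw [← Real.rpow_natCast a k, ← Real.rpow_mul ha0.le]
      rw [mul_one_div, div_self hkR, Real.rpow_one]
    rw [h1, hpdef]
    exact Real.rpow_le_rpow (pow_nonneg ha0.le k) hak (by positivity)
  -- conclusion
  have hrp : r ≤ 1 + p := by linarith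
  have hinv : 1/(1+p) ≤ r⁻¹ := by
    rw [one_div]
    exact inv_anti₀ hr0 hrp
  calc μ ≤ s := hμs
    _ = r - r⁻¹ := hseq
    _ ≤ (1 + p) - 1/(1+p) := by linarith
end

section
/- Dual vertex degree estimate: if G has at least one edge, then every eigenvalue μ of the Kirchhoff Laplacian H₀ of G satisfies μ ≤ r − 1/r, where r = 1 + max over all edges {a,b} of G of (deg(a) + deg(b)), the maximum being over the sums of the two vertex degrees of the endpoints of an edge. -/
open Matrix

variable {V : Type*} [Fintype V] [DecidableEq V] (G : SimpleGraph V) [DecidableRel G.Adj]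

/-- The sum of the degrees of the two endpoints of an edge. -/
def edgeDegSum (f : Sym2 V) : ℕ :=
  Sym2.lift ⟨fun a b => G.degree a + G.degree b, fun a b => by dsimp only; rw [add_comm]⟩ f

/-- Dual vertex degree estimate: if `G` has an edge, every eigenvalue `μ` of the
Kirchhoff Laplacian satisfies `μ ≤ r - 1/r` with
`r = 1 + max_{edges {a,b}} (deg a + deg b)`. -/
theorem dual_vertex_estimate (he : G.edgeFinset.Nonempty) (μ : ℝ)
    (hμ : ∃ w : V → ℝ, w ≠ 0 ∧ (kirchhoff G).mulVec w = μ • w) :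
    μ ≤ (1 + ((G.edgeFinset.sup (edgeDegSum G) : ℕ) : ℝ))
        - 1 / (1 + ((G.edgeFinset.sup (edgeDegSum G) : ℕ) : ℝ)) := by
  set S : ℝ := ((G.edgeFinset.sup (edgeDegSum G) : ℕ) : ℝ) with hSdef
  have hS0 : (0:ℝ) ≤ S := Nat.cast_nonneg _
  have key : μ ≤ S := by
    rcases le_or_gt μ 0 with hle | hμpos
    · linarith
    obtain ⟨w, hw0, hw⟩ := hμ
    have heig : ∀ i, (G.degree i : ℝ) * w i - ∑ y ∈ G.neighborFinset i, w y = μ * w i := by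
      intro i
      have := congrFun hw i
      simpa [kirchhoff, sub_mulVec, mulVec_diagonal, Pi.smul_apply, smul_eq_mul] using this
    obtain ⟨i0, hi0⟩ : ∃ i, w i ≠ 0 := Function.ne_iff.mp hw0
    obtain ⟨u, -, hu⟩ := Finset.exists_max_image (Finset.univ : Finset V)
      (fun i => |w i|) ⟨i0, Finset.mem_univ _⟩
    have hu' : ∀ i, |w i| ≤ |w u| := fun i => hu i (Finset.mem_univ i)
    have hwu : w u ≠ 0 := by
      intro h
      exact hi0 (abs_eq_zero.mp (le_antisymm (by simpa [h] using hu' i0) (abs_nonneg _)))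
    set x : V → ℝ := if 0 < w u then w else -w with hxdef
    have heigx : ∀ i, (G.degree i : ℝ) * x i - ∑ y ∈ G.neighborFinset i, x y = μ * x i := by
      intro i
      by_cases h : 0 < w u <;> simp only [hxdef, h, if_true, if_false, Pi.neg_apply,
        Finset.sum_neg_distrib]
      · exact heig i
      · have := heig i; ring_nf; ring_nf at this; linarith
    have habs : ∀ i, |x i| = |w i| := by
      intro i; by_cases h : 0 < w u <;> simp [hxdef, h]
    have hxu : 0 < x u := by
      by_cases h : 0 < w u
      · simpa [hxdef, h] using h
      · have : w u < 0 := lt_of_le_of_ne (not_lt.mp h) hwu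
        simp only [hxdef, h, if_false, Pi.neg_apply]
        linarith
    have hxmax : ∀ i, |x i| ≤ x u := by
      intro i
      rw [habs i, ← abs_of_pos hxu]
      rw [hxdef]
      by_cases h : 0 < w u <;> simp [h, hu' i]
    -- degree of u is positive
    have hdu : 0 < G.degree u := by
      by_contra h
      have hd0 : G.degree u = 0 := Nat.eq_zero_of_not_pos h
      have hN : G.neighborFinset u = ∅ := by
        rwa [← Finset.card_eq_zero, G.card_neighborFinset_eq_degree]
      have := heigx u
      rw [hN, hd0] at this
      simp at this
      rcases this with h1 | h1
      · linarith
      · linarith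
    obtain ⟨v, hvmem, hv⟩ := Finset.exists_max_image (G.neighborFinset u)
      (fun i => |x i|) (Finset.card_pos.mp (by rwa [G.card_neighborFinset_eq_degree]))
    have hadj : G.Adj u v := (SimpleGraph.mem_neighborFinset G u v).mp hvmem
    set a : ℝ := (G.degree u : ℝ)
    set b : ℝ := (G.degree v : ℝ)
    have ha0 : 0 ≤ a := Nat.cast_nonneg _
    have hb0 : 0 ≤ b := Nat.cast_nonneg _
    -- estimate 1 : (μ - a) * x u ≤ a * |x v|
    have E1 : (μ - a) * x u ≤ a * |x v| := by
      have h1 : (μ - a) * x u = -(∑ y ∈ G.neighborFinset u, x y) := by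
        have := heigx u; ring_nf; ring_nf at this; linarith
      have h2 : -(∑ y ∈ G.neighborFinset u, x y) ≤ ∑ y ∈ G.neighborFinset u, |x y| := by
        calc -(∑ y ∈ G.neighborFinset u, x y) ≤ |∑ y ∈ G.neighborFinset u, x y| :=
              neg_le_abs _
          _ ≤ ∑ y ∈ G.neighborFinset u, |x y| := Finset.abs_sum_le_sum_abs _ _
      have h3 : ∑ y ∈ G.neighborFinset u, |x y| ≤ a * |x v| := by
        calc ∑ y ∈ G.neighborFinset u, |x y| ≤ ∑ _y ∈ G.neighborFinset u, |x v| :=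
              Finset.sum_le_sum (fun i hi => hv i hi)
          _ = a * |x v| := by
              rw [Finset.sum_const, nsmul_eq_mul, G.card_neighborFinset_eq_degree]
      linarith
    -- estimate 2 : (μ - b) * |x v| ≤ b * x u
    have E2 : (μ - b) * |x v| ≤ b * x u := by
      have h1 : (μ - b) * x v = -(∑ y ∈ G.neighborFinset v, x y) := by
        have := heigx v; ring_nf; ring_nf at this; linarith
      have h2 : (μ - b) * |x v| ≤ |∑ y ∈ G.neighborFinset v, x y| := by
        calc (μ - b) * |x v| ≤ |μ - b| * |x v| :=
              mul_le_mul_of_nonneg_right (le_abs_self _) (abs_nonneg _)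
          _ = |(μ - b) * x v| := (abs_mul _ _).symm
          _ = |∑ y ∈ G.neighborFinset v, x y| := by rw [h1, abs_neg]
      have h3 : |∑ y ∈ G.neighborFinset v, x y| ≤ ∑ y ∈ G.neighborFinset v, |x y| :=
        Finset.abs_sum_le_sum_abs _ _
      have h4 : ∑ y ∈ G.neighborFinset v, |x y| ≤ b * x u := by
        calc ∑ y ∈ G.neighborFinset v, |x y| ≤ ∑ _y ∈ G.neighborFinset v, x u :=
              Finset.sum_le_sum (fun i _ => hxmax i)
          _ = b * x u := by
              rw [Finset.sum_const, nsmul_eq_mul, G.card_neighborFinset_eq_degree]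
      linarith
    -- conclude μ ≤ a + b
    have hmuab : μ ≤ a + b := by
      by_contra hcon
      push_neg at hcon
      have h1 : 0 < μ - a := by linarith
      have h2 : 0 < μ - b := by linarith
      have hxv0 : 0 ≤ |x v| := abs_nonneg _
      nlinarith [mul_le_mul_of_nonneg_left E2 ha0, mul_le_mul_of_nonneg_left E1 h2.le,
        mul_pos hμpos hxu]
    -- edge degree sum bound
    have hedge : s(u, v) ∈ G.edgeFinset := by
      rw [SimpleGraph.mem_edgeFinset]
      exact hadj
    have hle : edgeDegSum G s(u, v) ≤ G.edgeFinset.sup (edgeDegSum G) :=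
      Finset.le_sup hedge
    have hcast : (edgeDegSum G s(u, v) : ℝ) = a + b := by
      simp [edgeDegSum, a, b]
    calc μ ≤ a + b := hmuab
      _ = (edgeDegSum G s(u, v) : ℝ) := hcast.symm
      _ ≤ S := by rw [hSdef]; exact_mod_cast hle
  have h1S : (1:ℝ) ≤ 1 + S := by linarith
  have hdiv : 1 / (1 + S) ≤ 1 := by
    rw [div_le_one (by linarith)]; linarith
  linarith
end

section
/- Jacobi equation for the connection random walk: over the rationals the connection Laplacian L is invertible, and for every integer n (integer powers taken using the inverse) one has L^{n+2} − 2·L^{n} + L^{n−2} = |H|² · L^{n}; in particular, for every rational vector ψ on S the two-sided random walk ψ(n) = Lⁿψ solves ψ(n+2) − 2ψ(n) + ψ(n−2) = |H|²ψ(n). -/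
open Matrix

variable {V : Type*} [Fintype V] [DecidableEq V]

variable (G : SimpleGraph V) [DecidableRel G.Adj]

/-- The connection Laplacian as a rational matrix. -/
def connLQ : Matrix (Simplex G) (Simplex G) ℚ := (connL G).map (Int.cast : ℤ → ℚ)

/-- The sign-less Hodge Laplacian as a rational matrix. -/
def absHQ : Matrix (Simplex G) (Simplex G) ℚ := (absH G).map (Int.cast : ℤ → ℚ)

/-- The vertex-edge incidence matrix. -/
def Bm : Matrix V G.edgeSet ℤ := Matrix.of fun v e => if v ∈ (e : Sym2 V) then 1 else 0

lemma absd_block : absd G + (absd G)ᵀ = Matrix.fromBlocks 0 (Bm G) (Bm G)ᵀ 0 := by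
  ext x y
  cases x <;> cases y <;>
    simp [absd, Bm, Matrix.transpose_apply, Matrix.fromBlocks]

lemma edge_edge (e f : G.edgeSet) :
    (if (∃ w, w ∈ (e : Sym2 V) ∧ w ∈ (f : Sym2 V)) then (1:ℤ) else 0)
      = (∑ v : V, (if v ∈ (e : Sym2 V) then (1:ℤ) else 0) * (if v ∈ (f : Sym2 V) then 1 else 0))
        - (if e = f then 1 else 0) := by
  have hsum : (∑ v : V, (if v ∈ (e : Sym2 V) then (1:ℤ) else 0) * (if v ∈ (f : Sym2 V) then 1 else 0))
      = (Finset.univ.filter (fun v => v ∈ (e : Sym2 V) ∧ v ∈ (f : Sym2 V))).card := by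
    rw [Finset.card_filter]
    push_cast
    refine Finset.sum_congr rfl fun v _ => ?_
    by_cases h1 : v ∈ (e : Sym2 V) <;> by_cases h2 : v ∈ (f : Sym2 V) <;> simp [h1, h2]
  rw [hsum]
  by_cases hef : e = f
  · subst hef
    obtain ⟨⟨a, b⟩, hab'⟩ := Quot.exists_rep (e : Sym2 V)
    have hab : (e : Sym2 V) = s(a, b) := hab'.symm
    have hne : a ≠ b := by
      have h2 := e.2
      rw [hab] at h2
      exact (G.mem_edgeSet.mp h2).ne
    have : (Finset.univ.filter (fun v => v ∈ (e : Sym2 V) ∧ v ∈ (e : Sym2 V))) = {a, b} := by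
      ext v; simp [hab, Sym2.mem_iff]
    rw [this]
    simp [Finset.card_insert_of_notMem, hne]
    exact ⟨a, by simp [hab]⟩
  · by_cases ht : ∃ w, w ∈ (e : Sym2 V) ∧ w ∈ (f : Sym2 V)
    · obtain ⟨w, hw1, hw2⟩ := ht
      have : (Finset.univ.filter (fun v => v ∈ (e : Sym2 V) ∧ v ∈ (f : Sym2 V))) = {w} := by
        ext v
        simp only [Finset.mem_filter, Finset.mem_univ, true_and, Finset.mem_singleton]
        constructor
        · rintro ⟨h1, h2⟩
          by_contra hvw
          exact hef (Subtype.ext (Sym2.eq_of_ne_mem hvw h1 hw1 h2 hw2))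
        · rintro rfl; exact ⟨hw1, hw2⟩
      rw [this]
      simp [hef]
      exact ⟨w, hw1, hw2⟩
    · have : (Finset.univ.filter (fun v => v ∈ (e : Sym2 V) ∧ v ∈ (f : Sym2 V))) = ∅ := by
        ext v; simp only [Finset.mem_filter, Finset.mem_univ, true_and, Finset.notMem_empty,
          iff_false]
        exact fun h => ht ⟨v, h⟩
      rw [this]
      simp [hef, ht]

lemma connL_block :
    connL G = Matrix.fromBlocks 1 (Bm G) (Bm G)ᵀ ((Bm G)ᵀ * Bm G - 1) := by
  ext x y
  cases x with
  | inl u =>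
    cases y with
    | inl w =>
      simp [connL, Bm, touches, sVerts, Matrix.fromBlocks, Matrix.one_apply, eq_comm]
    | inr f =>
      simp [connL, Bm, touches, sVerts, Matrix.fromBlocks]
  | inr e =>
    cases y with
    | inl w =>
      simp [connL, Bm, touches, sVerts, Matrix.fromBlocks]
    | inr f =>
      simp only [connL, Matrix.of_apply, Matrix.fromBlocks_apply₂₂, Matrix.sub_apply,
        Matrix.mul_apply, Matrix.transpose_apply, Bm, Matrix.one_apply, touches, sVerts,
        Set.mem_setOf_eq]
      convert edge_edge G e f using 2

lemma fromBlocks_sub' {l m n o : Type*} (A A' : Matrix n l ℤ) (B B' : Matrix n m ℤ)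
    (C C' : Matrix o l ℤ) (D D' : Matrix o m ℤ) :
    Matrix.fromBlocks A B C D - Matrix.fromBlocks A' B' C' D'
      = Matrix.fromBlocks (A - A') (B - B') (C - C') (D - D') := by
  ext i j
  cases i <;> cases j <;> simp [Matrix.fromBlocks]

lemma key_left : (connL G - absH G) * connL G = 1 := by
  rw [absH, absd_block, connL_block, sq, Matrix.fromBlocks_multiply]
  simp only [Matrix.zero_mul, Matrix.mul_zero, zero_add, add_zero,
    fromBlocks_sub']
  rw [Matrix.fromBlocks_multiply]
  rw [← Matrix.fromBlocks_one]
  refine Matrix.fromBlocks_inj.mpr ⟨?_, ?_, ?_, ?_⟩ <;>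
    (simp only [sub_zero, Matrix.sub_mul, Matrix.mul_sub, Matrix.one_mul, Matrix.mul_one,
      Matrix.mul_assoc]; abel)

lemma key_right : connL G * (connL G - absH G) = 1 := by
  rw [absH, absd_block, connL_block, sq, Matrix.fromBlocks_multiply]
  simp only [Matrix.zero_mul, Matrix.mul_zero, zero_add, add_zero,
    fromBlocks_sub']
  rw [Matrix.fromBlocks_multiply]
  rw [← Matrix.fromBlocks_one]
  refine Matrix.fromBlocks_inj.mpr ⟨?_, ?_, ?_, ?_⟩ <;>
    (simp only [sub_zero, Matrix.sub_mul, Matrix.mul_sub, Matrix.one_mul, Matrix.mul_one,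
      Matrix.mul_assoc]; abel)

lemma connLQ_eq : connLQ G = (Int.castRingHom ℚ).mapMatrix (connL G) := rfl

lemma absHQ_eq : absHQ G = (Int.castRingHom ℚ).mapMatrix (absH G) := rfl

lemma keyQ_left : (connLQ G - absHQ G) * connLQ G = 1 := by
  rw [connLQ_eq, absHQ_eq, ← _root_.map_sub, ← _root_.map_mul, key_left, _root_.map_one]

lemma keyQ_right : connLQ G * (connLQ G - absHQ G) = 1 := by
  rw [connLQ_eq, absHQ_eq, ← _root_.map_sub, ← _root_.map_mul, key_right, _root_.map_one]

/-- Jacobi equation for the connection random walk: `L` is invertible over `ℚ`, and for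
every integer `n` one has `L^(n+2) - 2 L^n + L^(n-2) = |H|² L^n`; in particular the
two-sided random walk `ψ(n) = Lⁿ ψ` solves `ψ(n+2) - 2 ψ(n) + ψ(n-2) = |H|² ψ(n)`. -/
theorem jacobi_equation :
    IsUnit (connLQ G) ∧
    ∀ n : ℤ,
      (connLQ G ^ (n + 2) - 2 • connLQ G ^ n + connLQ G ^ (n - 2)
        = absHQ G ^ 2 * connLQ G ^ n) ∧
      ∀ ψ : Simplex G → ℚ,
        (connLQ G ^ (n + 2)).mulVec ψ - 2 • (connLQ G ^ n).mulVec ψ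
            + (connLQ G ^ (n - 2)).mulVec ψ
          = (absHQ G ^ 2).mulVec ((connLQ G ^ n).mulVec ψ) := by
  set K := connLQ G with hK
  set Hq := absHQ G with hH
  have hunit : IsUnit K := ⟨⟨K, K - Hq, keyQ_right G, keyQ_left G⟩, rfl⟩
  have hdet : IsUnit K.det := (Matrix.isUnit_iff_isUnit_det K).mp hunit
  have hinv : K⁻¹ = K - Hq := Matrix.inv_eq_right_inv (keyQ_right G)
  have hHq : Hq = K - K⁻¹ := by rw [hinv]; abel
  have hmain : ∀ n : ℤ, K ^ (n + 2) - 2 • K ^ n + K ^ (n - 2) = Hq ^ 2 * K ^ n := by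
    intro n
    have h1 : K ^ (n + 2) = K ^ (2:ℤ) * K ^ n := by
      rw [add_comm, Matrix.zpow_add hdet]
    have h2 : K ^ (n - 2) = K ^ (-2:ℤ) * K ^ n := by
      rw [sub_eq_add_neg, add_comm, Matrix.zpow_add hdet]
    have h3 : K ^ (2:ℤ) = K * K := by
      rw [show (2:ℤ) = ((2:ℕ):ℤ) by norm_num, zpow_natCast, sq]
    have h4 : K ^ (-2:ℤ) = K⁻¹ * K⁻¹ := by
      rw [show (-2:ℤ) = -((2:ℕ):ℤ) by norm_num, Matrix.zpow_neg hdet,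
        zpow_natCast, ← Matrix.inv_pow', sq]
    have hsq : Hq ^ 2 = K ^ (2:ℤ) - 2 • (1 : Matrix (Simplex G) (Simplex G) ℚ) + K ^ (-2:ℤ) := by
      rw [sq, hHq, h3, h4]
      have hKl : K⁻¹ * K = 1 := Matrix.nonsing_inv_mul K hdet
      have hKr : K * K⁻¹ = 1 := Matrix.mul_nonsing_inv K hdet
      rw [sub_mul, mul_sub, mul_sub, hKr, hKl]
      rw [two_smul]
      noncomm_ring
    rw [h1, h2, hsq, add_mul, sub_mul, smul_mul_assoc, one_mul]
  refine ⟨hunit, fun n => ⟨hmain n, fun ψ => ?_⟩⟩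
  have := congrArg (fun M => Matrix.mulVec M ψ) (hmain n)
  simp only [Matrix.sub_mulVec, Matrix.add_mulVec, Matrix.smul_mulVec,
    ← Matrix.mulVec_mulVec] at this
  exact this
end

section
/- Quaternion initial value lemma: the real vector space of all functions ψ : ℤ → (S → ℝ) satisfying the discrete Laplace equation ψ(n+2) − 2ψ(n) + ψ(n−2) = |H|²·ψ(n) for all integers n (where |H|² acts on S → ℝ by matrix-vector multiplication) is a subspace of dimension exactly 4·(v + e); equivalently, a solution is uniquely determined by a quaternion-valued initial field, i.e. by four functions S → ℝ. -/
open Matrix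

variable {V : Type*} [Fintype V] [DecidableEq V]

variable (G : SimpleGraph V) [DecidableRel G.Adj]

/-- The sign-less Hodge Laplacian as a real matrix. -/
def absHR : Matrix (Simplex G) (Simplex G) ℝ := (absH G).map (Int.cast : ℤ → ℝ)

section Aux

set_option linter.unusedSectionVars false

variable {ι : Type*} [Fintype ι]

/-- A quadruple of fields, representing four consecutive values of a solution. -/
abbrev Quad (ι : Type*) := (ι → ℝ) × (ι → ℝ) × (ι → ℝ) × (ι → ℝ)

variable (A : Matrix ι ι ℝ)

/-- The step map `x ↦ A x + 2 x`. -/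
noncomputable def Mstep (x : ι → ℝ) : ι → ℝ := A.mulVec x + (2 : ℝ) • x

/-- The shift on quadruples of consecutive values. -/
noncomputable def shiftE : Equiv.Perm (Quad ι) where
  toFun p := (p.2.1, p.2.2.1, p.2.2.2, Mstep A p.2.2.1 - p.1)
  invFun p := (Mstep A p.2.1 - p.2.2.2, p.1, p.2.1, p.2.2.1)
  left_inv p := by simp
  right_inv p := by simp

/-- The two-sided solution sequence with given initial quadruple. -/
noncomputable def solSeq (p : Quad ι) (n : ℤ) : ι → ℝ := ((shiftE A ^ n) p).1

lemma shiftE_key (n : ℤ) (p : Quad ι) :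
    (shiftE A ^ (n + 1)) p = shiftE A ((shiftE A ^ n) p) := by
  rw [add_comm, _root_.zpow_add, zpow_one, Equiv.Perm.mul_apply]

lemma solSeq_zero (p : Quad ι) : solSeq A p 0 = p.1 := by
  simp [solSeq]

lemma solSeq_one (p : Quad ι) : solSeq A p 1 = p.2.1 := by
  simp only [solSeq, zpow_one]
  rfl

lemma solSeq_two (p : Quad ι) : solSeq A p 2 = p.2.2.1 := by
  have h := shiftE_key A 1 p
  simp only [solSeq, show (2 : ℤ) = 1 + 1 from rfl, h, zpow_one]
  rfl

lemma solSeq_three (p : Quad ι) : solSeq A p 3 = p.2.2.2 := by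
  have h1 := shiftE_key A 1 p
  have h2 := shiftE_key A 2 p
  simp only [solSeq, show (3 : ℤ) = 2 + 1 from rfl, h2,
    show (2 : ℤ) = 1 + 1 from rfl, h1, zpow_one]
  rfl

lemma solSeq_rec (p : Quad ι) (n : ℤ) :
    solSeq A p (n + 2) - (2 : ℝ) • solSeq A p n + solSeq A p (n - 2)
      = A.mulVec (solSeq A p n) := by
  have h1 : (shiftE A ^ (n - 1)) p = shiftE A ((shiftE A ^ (n - 2)) p) := by
    have := shiftE_key A (n - 2) p
    rw [show n - 2 + 1 = n - 1 by ring] at this; exact this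
  have h2 : (shiftE A ^ n) p = shiftE A ((shiftE A ^ (n - 1)) p) := by
    have := shiftE_key A (n - 1) p
    rw [show n - 1 + 1 = n by ring] at this; exact this
  have h3 : (shiftE A ^ (n + 1)) p = shiftE A ((shiftE A ^ n) p) := shiftE_key A n p
  have h4 : (shiftE A ^ (n + 2)) p = shiftE A ((shiftE A ^ (n + 1)) p) := by
    have := shiftE_key A (n + 1) p
    rw [show n + 1 + 1 = n + 2 by ring] at this; exact this
  simp only [solSeq]
  rw [h4, h3, h2, h1]
  generalize (shiftE A ^ (n - 2)) p = q
  simp only [shiftE, Mstep, Equiv.coe_fn_mk]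
  module

/-- Uniqueness: a solution vanishing at `0, 1, 2, 3` vanishes identically. -/
lemma sol_unique (ψ : ℤ → ι → ℝ)
    (hψ : ∀ n : ℤ, ψ (n + 2) - (2 : ℝ) • ψ n + ψ (n - 2) = A.mulVec (ψ n))
    (h0 : ψ 0 = 0) (h1 : ψ 1 = 0) (h2 : ψ 2 = 0) (h3 : ψ 3 = 0) :
    ψ = 0 := by
  have fwd : ∀ n : ℤ, ψ (n + 2) = A.mulVec (ψ n) + (2 : ℝ) • ψ n - ψ (n - 2) := by
    intro n
    rw [← hψ n]; abel
  have bwd : ∀ n : ℤ, ψ (n - 2) = A.mulVec (ψ n) + (2 : ℝ) • ψ n - ψ (n + 2) := by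
    intro n
    rw [← hψ n]; abel
  have up : ∀ k : ℕ, ψ (k : ℤ) = 0 := by
    intro k
    induction k using Nat.strong_induction_on with
    | _ k ih =>
      match k with
      | 0 => exact h0
      | 1 => exact h1
      | 2 => exact h2
      | 3 => exact h3
      | (m + 4) =>
        have e2 : ψ ((m : ℤ) + 2) = 0 := by
          have := ih (m + 2) (by omega)
          push_cast at this
          exact this
        have e0 : ψ ((m : ℤ)) = 0 := ih m (by omega)
        have key : ψ (((m : ℤ) + 2) + 2) = 0 := by
          rw [fwd ((m : ℤ) + 2), show (m : ℤ) + 2 - 2 = (m : ℤ) by ring, e2, e0]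
          simp
        push_cast
        rw [show (m : ℤ) + 4 = ((m : ℤ) + 2) + 2 by ring]
        exact key
  have down : ∀ k : ℕ, ψ (3 - (k : ℤ)) = 0 := by
    intro k
    induction k using Nat.strong_induction_on with
    | _ k ih =>
      match k with
      | 0 => exact h3
      | 1 => exact h2
      | 2 => exact h1
      | 3 => exact h0
      | (m + 4) =>
        have e2 : ψ (1 - (m : ℤ)) = 0 := by
          have := ih (m + 2) (by omega)
          push_cast at this
          rw [show (3 : ℤ) - ((m : ℤ) + 2) = 1 - (m : ℤ) by ring] at this
          exact this
        have e0 : ψ (3 - (m : ℤ)) = 0 := ih m (by omega)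
        have key : ψ ((1 - (m : ℤ)) - 2) = 0 := by
          rw [bwd (1 - (m : ℤ)), e2, show (1 : ℤ) - (m : ℤ) + 2 = 3 - (m : ℤ) by ring, e0]
          simp
        push_cast
        rw [show (3 : ℤ) - ((m : ℤ) + 4) = (1 - (m : ℤ)) - 2 by ring]
        exact key
  funext n
  rcases le_or_gt 0 n with h | h
  · obtain ⟨k, rfl⟩ := Int.eq_ofNat_of_zero_le h
    exact up k
  · have hk : n = 3 - ((3 - n).toNat : ℤ) := by
      rw [Int.toNat_of_nonneg (by omega)]; ring
    rw [hk]
    exact down _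

end Aux

/-- Quaternion initial value lemma: the solution space of the discrete Laplace equation
`ψ(n+2) - 2 ψ(n) + ψ(n-2) = |H|² ψ(n)` is a subspace of dimension exactly `4 (v + e)`,
i.e. a solution corresponds to a quaternion-valued initial field on the simplices. -/
theorem quaternion_initial_value :
    ∃ W : Submodule ℝ (ℤ → Simplex G → ℝ),
      (∀ ψ : ℤ → Simplex G → ℝ,
        ψ ∈ W ↔
          ∀ n : ℤ, ψ (n + 2) - (2 : ℝ) • ψ n + ψ (n - 2) = (absHR G ^ 2).mulVec (ψ n)) ∧
      Module.finrank ℝ W = 4 * (Fintype.card V + Fintype.card G.edgeSet) := by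
  classical
  set A : Matrix (Simplex G) (Simplex G) ℝ := absHR G ^ 2 with hA
  let W : Submodule ℝ (ℤ → Simplex G → ℝ) :=
    { carrier := {ψ : ℤ → Simplex G → ℝ |
        ∀ n : ℤ, ψ (n + 2) - (2 : ℝ) • ψ n + ψ (n - 2) = A.mulVec (ψ n)}
      add_mem' := by
        intro f g hf hg n
        simp only [Set.mem_setOf_eq] at hf hg
        simp only [Pi.add_apply, Matrix.mulVec_add]
        rw [← hf n, ← hg n]
        module
      zero_mem' := by
        intro n
        simp
      smul_mem' := by
        intro c f hf n
        simp only [SetLike.mem_coe, Set.mem_setOf_eq] at hf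
        simp only [Pi.smul_apply, Matrix.mulVec_smul]
        rw [← hf n]
        module }
  have hmem : ∀ ψ : ℤ → Simplex G → ℝ, ψ ∈ W ↔
      ∀ n : ℤ, ψ (n + 2) - (2 : ℝ) • ψ n + ψ (n - 2) = A.mulVec (ψ n) :=
    fun ψ => Iff.rfl
  refine ⟨W, hmem, ?_⟩
  let φ : W →ₗ[ℝ] (Fin 4 → Simplex G → ℝ) :=
    { toFun := fun ψ i => ψ.1 ((i : ℕ) : ℤ)
      map_add' := fun f g => rfl
      map_smul' := fun c f => rfl }
  have hinj : Function.Injective φ := by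
    intro f g hfg
    apply Subtype.ext
    have hsub : (f : ℤ → Simplex G → ℝ) - g ∈ W := sub_mem f.2 g.2
    have hz : ∀ i : Fin 4, (f : ℤ → Simplex G → ℝ) ((i : ℕ) : ℤ) = g.1 ((i : ℕ) : ℤ) :=
      fun i => congrFun hfg i
    have hzero : (f : ℤ → Simplex G → ℝ) - g = 0 := by
      apply sol_unique A _ ((hmem _).mp hsub)
      · simpa using sub_eq_zero_of_eq (hz 0)
      · simpa using sub_eq_zero_of_eq (hz 1)
      · simpa using sub_eq_zero_of_eq (hz 2)
      · simpa using sub_eq_zero_of_eq (hz 3)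
    exact sub_eq_zero.mp hzero
  have hsurj : Function.Surjective φ := by
    intro x
    refine ⟨⟨solSeq A (x 0, x 1, x 2, x 3), (hmem _).mpr (solSeq_rec A _)⟩, ?_⟩
    funext i
    fin_cases i
    · simpa [φ] using solSeq_zero A (x 0, x 1, x 2, x 3)
    · simpa [φ] using solSeq_one A (x 0, x 1, x 2, x 3)
    · simpa [φ] using solSeq_two A (x 0, x 1, x 2, x 3)
    · simpa [φ] using solSeq_three A (x 0, x 1, x 2, x 3)
  have e : W ≃ₗ[ℝ] (Fin 4 → Simplex G → ℝ) := LinearEquiv.ofBijective φ ⟨hinj, hsurj⟩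
  rw [e.finrank_eq, Module.finrank_pi_fintype ℝ]
  simp [Module.finrank_pi]
end

section
/- Bipartite similarity of the Hodge and sign-less Hodge Laplacians: suppose G is bipartite (2-colorable) and an orientation of the edges is given by maps h, t : E(G) → V with, for each edge f, the endpoint set of f equal to {h(f), t(f)} and h(f) ≠ t(f). Define the signed incidence matrix d as the S×S integer matrix whose only nonzero entries are d(f, h(f)) = 1 and d(f, t(f)) = −1 for each edge f, and set H = (d + dᵀ)². Then H and |H| have the same characteristic polynomial. -/
open Matrix

variable {V : Type*} [Fintype V] [DecidableEq V]

variable (G : SimpleGraph V) [DecidableRel G.Adj]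

/-- The signed incidence matrix for an orientation given by head and tail maps. -/
def signedD (eh et : G.edgeSet → V) : Matrix (Simplex G) (Simplex G) ℤ :=
  Matrix.of fun a b =>
    match a, b with
    | Sum.inr f, Sum.inl u => if u = eh f then 1 else if u = et f then -1 else 0
    | _, _ => 0

open Polynomial in
lemma charpoly_conj_self {n R : Type*} [DecidableEq n] [Fintype n] [CommRing R]
    (D A : Matrix n n R) (h : D * D = 1) : (D * A * D).charpoly = A.charpoly := by
  have hD : D.map C * D.map C = 1 := by
    rw [← Matrix.map_mul, h, Matrix.map_one C C.map_zero C.map_one]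
  have hsc : Matrix.scalar n (X : R[X]) * D.map C = D.map C * Matrix.scalar n X :=
    (Matrix.scalar_commute _ (fun r' => Commute.all _ _) _).eq
  have key : charmatrix (D * A * D) = D.map C * charmatrix A * D.map C := by
    unfold Matrix.charmatrix
    rw [Matrix.mul_sub, Matrix.sub_mul, ← hsc, Matrix.mul_assoc _ _ (D.map C), hD,
      Matrix.mul_one]
    congr 1
    simp only [RingHom.mapMatrix_apply]
    rw [Matrix.map_mul, Matrix.map_mul, Matrix.mul_assoc]
  rw [Matrix.charpoly, Matrix.charpoly, key, Matrix.det_mul, Matrix.det_mul,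
    mul_comm, ← mul_assoc, ← Matrix.det_mul, hD, Matrix.det_one, one_mul]

/-- Bipartite similarity of the Hodge and sign-less Hodge Laplacians: if `G` is
2-colorable and `eh, et` give an orientation of the edges, then `H = (d + dᵀ)²` and
`|H|` have the same characteristic polynomial. -/
theorem bipartite_hodge_similar (hb : G.Colorable 2) (eh et : G.edgeSet → V)
    (hor : ∀ f : G.edgeSet, (f : Sym2 V) = s(eh f, et f) ∧ eh f ≠ et f) :
    ((signedD G eh et + (signedD G eh et)ᵀ) ^ 2).charpoly = (absH G).charpoly := by
  classical
  obtain ⟨c⟩ := hb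
  -- the sign of each vertex, from the 2-coloring
  set σ : V → ℤ := fun u => if c u = 0 then 1 else -1 with hσ
  have hσsq : ∀ u, σ u * σ u = 1 := by
    intro u; by_cases h : c u = 0 <;> simp [hσ, h]
  have hσne : ∀ a b : V, c a ≠ c b → σ a * σ b = -1 := by
    intro a b hab
    have h2 : ∀ x : Fin 2, x = 0 ∨ x = 1 := by decide
    rcases h2 (c a) with ha | ha <;> rcases h2 (c b) with hb | hb <;>
      simp [hσ, ha, hb] at hab ⊢
  have hadj : ∀ f : G.edgeSet, G.Adj (eh f) (et f) := by
    intro f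
    have := f.2
    rw [(hor f).1] at this
    exact this
  set ε : Simplex G → ℤ := fun x =>
    match x with
    | Sum.inl u => σ u
    | Sum.inr f => σ (eh f) with hε
  set D : Matrix (Simplex G) (Simplex G) ℤ := Matrix.diagonal ε with hDdef
  have hDD : D * D = 1 := by
    rw [hDdef, Matrix.diagonal_mul_diagonal, ← Matrix.diagonal_one]
    have hx : (fun i => ε i * ε i) = fun _ => (1 : ℤ) := by
      funext x
      cases x with
      | inl u => exact hσsq u
      | inr f => exact hσsq (eh f)
    rw [hx]
  set A : Matrix (Simplex G) (Simplex G) ℤ := signedD G eh et + (signedD G eh et)ᵀ with hA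
  set B : Matrix (Simplex G) (Simplex G) ℤ := absd G + (absd G)ᵀ with hB
  -- the entrywise key computation
  have hkey : ∀ (f : G.edgeSet) (u : V),
      σ (eh f) * ((if u = eh f then 1 else if u = et f then -1 else 0 : ℤ) * σ u) =
        if u ∈ (f : Sym2 V) then 1 else 0 := by
    intro f u
    have hmem : u ∈ (f : Sym2 V) ↔ u = eh f ∨ u = et f := by
      rw [(hor f).1, Sym2.mem_iff]
    by_cases h1 : u = eh f
    · subst h1
      simp only [if_pos rfl, hmem, true_or, if_pos, one_mul]
      exact hσsq _
    · by_cases h2 : u = et f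
      · subst h2
        have hne : c (eh f) ≠ c (et f) := c.valid (hadj f)
        have := hσne (eh f) (et f) hne
        simp only [if_neg h1, if_pos rfl, hmem, or_true, if_pos]
        linarith [this]
      · simp [h1, h2, hmem]
  have key : D * A * D = B := by
    ext a b
    rw [hDdef, hA, hB]
    simp only [Matrix.diagonal_mul, Matrix.mul_diagonal]
    cases a with
    | inl u =>
      cases b with
      | inl w => simp [signedD, absd]
      | inr f =>
        have h := hkey f u
        simp only [signedD, absd, Matrix.add_apply, Matrix.transpose_apply,
          Matrix.of_apply, zero_add, add_zero]
        rw [← h]; ring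
    | inr f =>
      cases b with
      | inl u =>
        have h := hkey f u
        simp only [signedD, absd, Matrix.add_apply, Matrix.transpose_apply,
          Matrix.of_apply, zero_add, add_zero]
        rw [← h]; ring
      | inr g => simp [signedD, absd]
  have hB2 : B ^ 2 = D * A ^ 2 * D := by
    rw [← key, pow_two, pow_two]
    calc (D * A * D) * (D * A * D) = D * (A * ((D * D) * (A * D))) := by
          simp only [Matrix.mul_assoc]
      _ = D * (A * A) * D := by rw [hDD, Matrix.one_mul, Matrix.mul_assoc, Matrix.mul_assoc]
  show (A ^ 2).charpoly = (absH G).charpoly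
  rw [absH, ← hB, hB2, charpoly_conj_self _ _ hDD]
end
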